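/- arXiv:0906.3535 — 3 statements merged into one kernel-verified Lean document; each statement's English description precedes it below -/
import Mathlib

section
/- Let K ≥ 1, let G be a group and V an abelian group, let ρ : G → Aut(V) be an action of G on V by automorphisms, let A be a K-approximate group in G, and let E be a centred finite subset of V with |ρ(A^8)(E+E)| ≤ K|E|, where ρ(B)(F) := {ρ(b)(v) : b ∈ B, v ∈ F}. Then for every ε > 0 there exist a set E' ⊆ ρ(A²)(E) with |E'| ≥ c_K|E| for some constant c_K > 0 depending only on K, and a centred subset A' ⊆ A⁴ with |A'| ≥ c_{K,ε}|A| for some constant c_{K,ε} > 0 depending only on K and ε, such that |ρ(a)(E') \ E'| ≤ ε|E'| for every a ∈ A'. -/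
open Pointwise

/-- A `K`-approximate group: a finite symmetric set containing the identity, with
`A·A ⊆ X·A ⊆ A·X·X` and `A·A ⊆ A·X ⊆ X·X·A` for some set `X` of size at most `K`. -/
def IsApproxGroup {G : Type*} [Group G] (K : ℝ) (A : Set G) : Prop :=
  A.Finite ∧ (1 : G) ∈ A ∧ A⁻¹ = A ∧
    ∃ X : Set G, X.Finite ∧ (X.ncard : ℝ) ≤ K ∧
      A * A ⊆ X * A ∧ X * A ⊆ A * X * X ∧ A * A ⊆ A * X ∧ A * X ⊆ X * X * A

/-- `ρ(B)(F) := {ρ(b)(v) : b ∈ B, v ∈ F}`. -/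
def actImg {G V : Type*} [Group G] [AddCommGroup V] (ρ : G →* Multiplicative (AddAut V))
    (B : Set G) (F : Set V) : Set V :=
  {v | ∃ b ∈ B, ∃ w ∈ F, Multiplicative.toAdd (ρ b) w = v}

instance instCoeFunMultAddAut {V : Type*} [AddCommGroup V] :
    CoeFun (Multiplicative (AddAut V)) (fun _ => V → V) :=
  ⟨fun f => ⇑(Multiplicative.toAdd f : AddAut V)⟩

open Finset

lemma prod_if_single {k : ℕ} (i : Fin k) (X c : ℝ) :
    ∏ j : Fin k, (if j = i then X else c) = X * c ^ (k - 1) := by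
  rw [Finset.prod_eq_mul_prod_sdiff_singleton_of_mem (Finset.mem_univ i), if_pos rfl]
  congr 1
  rw [Finset.prod_congr rfl (fun j hj => if_neg (by simpa using (Finset.mem_sdiff.1 hj).2)),
    Finset.prod_const]
  congr 1
  rw [Finset.sdiff_singleton_eq_erase, Finset.card_erase_of_mem (Finset.mem_univ i)]
  simp

lemma pi_sum_eval {α : Type*} [DecidableEq α] {k : ℕ} (s : Finset α) (i : Fin k) (F : α → ℝ) :
    ∑ t ∈ Fintype.piFinset (fun _ : Fin k => s), F (t i)
      = (s.card : ℝ) ^ (k - 1) * ∑ a ∈ s, F a := by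
  classical
  have h := Finset.prod_univ_sum (fun _ : Fin k => s)
      (fun j a => if j = i then F a else (1:ℝ))
  have hL : (∏ j : Fin k, ∑ a ∈ s, if j = i then F a else (1:ℝ))
      = (∑ a ∈ s, F a) * (s.card : ℝ) ^ (k - 1) := by
    have : ∀ j : Fin k, (∑ a ∈ s, if j = i then F a else (1:ℝ))
        = if j = i then (∑ a ∈ s, F a) else (s.card : ℝ) := by
      intro j; by_cases hj : j = i <;> simp [hj]
    rw [Finset.prod_congr rfl (fun j _ => this j)]
    exact prod_if_single i _ _
  have hR : ∀ t : Fin k → α, (∏ j : Fin k, if j = i then F (t j) else (1:ℝ)) = F (t i) := by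
    intro t
    rw [Finset.prod_eq_single_of_mem i (Finset.mem_univ i) (fun b _ hb => if_neg hb), if_pos rfl]
  rw [hL] at h
  rw [mul_comm, h]
  exact Finset.sum_congr rfl fun t _ => (hR t).symm

lemma prod_if_pair {k : ℕ} (i j : Fin k) (hij : i ≠ j) (X Y c : ℝ) :
    ∏ l : Fin k, (if l = i then X else if l = j then Y else c) = X * Y * c ^ (k - 2) := by
  rw [Finset.prod_eq_mul_prod_sdiff_singleton_of_mem (Finset.mem_univ i), if_pos rfl]
  rw [Finset.prod_eq_mul_prod_sdiff_singleton_of_mem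
    (show j ∈ Finset.univ \ {i} by simp [Ne.symm, hij.symm])]
  rw [if_neg hij.symm, if_pos rfl]
  rw [Finset.prod_congr rfl (fun l hl => ?_), Finset.prod_const, ← mul_assoc]
  · congr 2
    rw [Finset.sdiff_singleton_eq_erase, Finset.sdiff_singleton_eq_erase,
      Finset.card_erase_of_mem, Finset.card_erase_of_mem (Finset.mem_univ i)]
    · simp only [Finset.card_univ, Fintype.card_fin]; omega
    · exact Finset.mem_erase.2 ⟨hij.symm, Finset.mem_univ j⟩
  · rcases Finset.mem_sdiff.1 hl with ⟨hl1, hl2⟩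
    rcases Finset.mem_sdiff.1 hl1 with ⟨_, hli⟩
    simp only [Finset.mem_singleton] at hl2 hli
    rw [if_neg hli, if_neg hl2]

lemma pi_sum_eval_pair {α : Type*} [DecidableEq α] {k : ℕ} (s : Finset α) (i j : Fin k)
    (hij : i ≠ j) (F Fg : α → ℝ) :
    ∑ t ∈ Fintype.piFinset (fun _ : Fin k => s), F (t i) * Fg (t j)
      = (s.card : ℝ) ^ (k - 2) * ((∑ a ∈ s, F a) * ∑ a ∈ s, Fg a) := by
  classical
  have h := Finset.prod_univ_sum (fun _ : Fin k => s)
      (fun l a => if l = i then F a else if l = j then Fg a else (1:ℝ))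
  have hL : (∏ l : Fin k, ∑ a ∈ s, if l = i then F a else if l = j then Fg a else (1:ℝ))
      = (∑ a ∈ s, F a) * (∑ a ∈ s, Fg a) * (s.card : ℝ) ^ (k - 2) := by
    have : ∀ l : Fin k, (∑ a ∈ s, if l = i then F a else if l = j then Fg a else (1:ℝ))
        = if l = i then (∑ a ∈ s, F a) else if l = j then (∑ a ∈ s, Fg a) else (s.card : ℝ) := by
      intro l; by_cases hl : l = i
      · simp [hl]
      · by_cases hl2 : l = j <;> simp [hl, hl2]
    rw [Finset.prod_congr rfl (fun l _ => this l)]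
    exact prod_if_pair i j hij _ _ _
  have hR : ∀ t : Fin k → α,
      (∏ l : Fin k, if l = i then F (t l) else if l = j then Fg (t l) else (1:ℝ))
        = F (t i) * Fg (t j) := by
    intro t
    rw [Finset.prod_eq_mul_prod_sdiff_singleton_of_mem (Finset.mem_univ i), if_pos rfl]
    rw [Finset.prod_eq_single_of_mem j (show j ∈ Finset.univ \ {i} by simp [hij.symm])]
    · rw [if_neg hij.symm, if_pos rfl]
    · intro b hb hbj
      rcases Finset.mem_sdiff.1 hb with ⟨_, hbi⟩
      simp only [Finset.mem_singleton] at hbi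
      rw [if_neg hbi, if_neg hbj]
  rw [hL] at h
  rw [show (s.card : ℝ) ^ (k - 2) * ((∑ a ∈ s, F a) * ∑ a ∈ s, Fg a)
    = (∑ a ∈ s, F a) * (∑ a ∈ s, Fg a) * (s.card : ℝ) ^ (k - 2) by ring, h]
  exact Finset.sum_congr rfl fun t _ => (hR t).symm

lemma sum_sq_centered {α : Type*} [DecidableEq α] {k : ℕ} (s : Finset α) (g : α → ℝ)
    (hg : ∑ a ∈ s, g a = 0) :
    ∑ t ∈ Fintype.piFinset (fun _ : Fin k => s), (∑ i : Fin k, g (t i)) ^ 2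
      = k * (s.card : ℝ) ^ (k - 1) * ∑ a ∈ s, g a ^ 2 := by
  classical
  have hexp : ∀ t : Fin k → α, (∑ i : Fin k, g (t i)) ^ 2
      = ∑ i : Fin k, ∑ j : Fin k, g (t i) * g (t j) := by
    intro t; rw [sq, Finset.sum_mul_sum]
  rw [Finset.sum_congr rfl (fun t _ => hexp t)]
  rw [Finset.sum_comm]
  rw [Finset.sum_congr rfl (fun i (_ : i ∈ Finset.univ) => Finset.sum_comm)]
  have hterm : ∀ i j : Fin k,
      (∑ t ∈ Fintype.piFinset (fun _ : Fin k => s), g (t i) * g (t j))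
        = if j = i then (s.card : ℝ) ^ (k - 1) * ∑ a ∈ s, g a ^ 2 else 0 := by
    intro i j
    by_cases hij : j = i
    · subst hij
      rw [if_pos rfl, pi_sum_eval s j (fun a => g a * g a)]
      congr 1
      exact Finset.sum_congr rfl fun a _ => by rw [sq]
    · rw [if_neg hij, pi_sum_eval_pair s i j (fun h => hij h.symm) g g, hg]
      simp
  rw [Finset.sum_congr rfl (fun i (_ : i ∈ Finset.univ) =>
    Finset.sum_congr rfl (fun j (_ : j ∈ Finset.univ) => hterm i j))]
  simp only [Finset.sum_ite_eq', Finset.mem_univ, if_pos]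
  rw [Finset.sum_const, Finset.card_univ, Fintype.card_fin, nsmul_eq_mul]
  ring

lemma var_bound {α : Type*} [DecidableEq α] {k : ℕ} (hk : 1 ≤ k) (s : Finset α) (f : α → ℝ)
    (hf : ∀ a, f a = 0 ∨ f a = 1) :
    ∑ t ∈ Fintype.piFinset (fun _ : Fin k => s),
        ((s.card : ℝ) * (∑ i : Fin k, f (t i)) - k * ∑ a ∈ s, f a) ^ 2
      ≤ k * (s.card : ℝ) ^ (k + 1) * ∑ a ∈ s, f a := by
  classical
  set n : ℝ := (s.card : ℝ) with hn
  set c := ∑ a ∈ s, f a with hc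
  have hc0 : 0 ≤ c := Finset.sum_nonneg fun a _ => by rcases hf a with h | h <;> simp [h]
  have hn0 : (0:ℝ) ≤ n := by positivity
  set g : α → ℝ := fun a => n * f a - c with hgdef
  have hg0 : ∑ a ∈ s, g a = 0 := by
    simp only [hgdef, Finset.sum_sub_distrib, ← Finset.mul_sum, Finset.sum_const, nsmul_eq_mul,
      ← hc, ← hn]
    ring
  have hrw : ∀ t : Fin k → α,
      (n * (∑ i : Fin k, f (t i)) - k * c) = ∑ i : Fin k, g (t i) := by
    intro t
    simp only [hgdef, Finset.sum_sub_distrib, ← Finset.mul_sum, Finset.sum_const,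
      Finset.card_univ, Fintype.card_fin, nsmul_eq_mul]
  rw [Finset.sum_congr rfl (fun t _ => by rw [hrw t])]
  rw [sum_sq_centered s g hg0]
  have hgsq : ∑ a ∈ s, g a ^ 2 ≤ n ^ 2 * c := by
    have h1 : ∀ a, g a ^ 2 = n ^ 2 * (f a) - 2 * n * c * f a + c ^ 2 := by
      intro a
      rcases hf a with h | h <;> simp only [hgdef, h] <;> ring
    rw [Finset.sum_congr rfl (fun a _ => h1 a)]
    rw [Finset.sum_add_distrib, Finset.sum_sub_distrib, ← Finset.mul_sum, ← Finset.mul_sum,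
      Finset.sum_const, nsmul_eq_mul, ← hc, ← hn]
    nlinarith [mul_nonneg hn0 (sq_nonneg c), sq_nonneg c]
  calc (k:ℝ) * n ^ (k - 1) * ∑ a ∈ s, g a ^ 2
      ≤ (k:ℝ) * n ^ (k - 1) * (n ^ 2 * c) := by
        apply mul_le_mul_of_nonneg_left hgsq; positivity
    _ = (k:ℝ) * n ^ (k + 1) * c := by
        rw [show k + 1 = k - 1 + 2 by omega, pow_add]
        ring


section
variable {G V : Type} [Group G] [DecidableEq G] [AddCommGroup V] [DecidableEq V]

set_option maxHeartbeats 4000000 in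
lemma aux_main (ρ : G →* Multiplicative (AddAut V)) (K ε : ℝ) (hK : 1 ≤ K) (hε : 0 < ε)
    (k m : ℕ) (hk2 : 2 ≤ k) (hm1 : 1 ≤ m)
    (hm : K / m ≤ ε / 8) (hkK : 4 * K * m * Real.sqrt (2 * k * K) ≤ ε / 4 * k)
    (A : Finset G) (E : Finset V) (hA1 : (1:G) ∈ A) (hAinv : A⁻¹ = A) (h0E : (0:V) ∈ E)
    (W : Finset V) (hW : ∀ g ∈ A * A * A, ∀ w ∈ E, ρ g w ∈ W)
    (hWcard : (W.card : ℝ) ≤ K * E.card) (hAA : ((A * A).card : ℝ) ≤ K * A.card) :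
    ∃ E' : Finset V,
      (∀ v ∈ E', ∃ g ∈ A * A, ∃ w ∈ E, ρ g w = v) ∧
      (E.card : ℝ) ≤ 2 * E'.card ∧
      ∃ B : Finset G, B ⊆ A ∧ B.Nonempty ∧
        (A.card : ℝ) ≤ 2 * K ^ k * ((B * B⁻¹).card : ℝ) ∧
        ∀ g ∈ B * B⁻¹, (((E'.image fun v => ρ g v) \ E').card : ℝ) ≤ ε * E'.card := by
  classical
  have hApos : 0 < A.card := Finset.card_pos.2 ⟨1, hA1⟩
  have hEpos : 0 < E.card := Finset.card_pos.2 ⟨0, h0E⟩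
  have hK0 : (0:ℝ) < K := lt_of_lt_of_le one_pos hK
  have hnR : (0:ℝ) < (A.card : ℝ) := by exact_mod_cast hApos
  have heR : (0:ℝ) < (E.card : ℝ) := by exact_mod_cast hEpos
  have hkR : (0:ℝ) < (k : ℝ) := by exact_mod_cast lt_of_lt_of_le two_pos hk2
  have hmR : (0:ℝ) < (m : ℝ) := by exact_mod_cast lt_of_lt_of_le one_pos hm1
  have hk1 : 1 ≤ k := le_trans one_le_two hk2
  -- the indicator functions
  set χ : G → V → ℝ := fun a v => if ρ (a⁻¹) v ∈ E then 1 else 0 with hχdef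
  have hχ01 : ∀ a v, χ a v = 0 ∨ χ a v = 1 := by
    intro a v
    by_cases h : ρ (a⁻¹) v ∈ E
    · exact Or.inr (by simp only [hχdef]; rw [if_pos h])
    · exact Or.inl (by simp only [hχdef]; rw [if_neg h])
  have hχ0 : ∀ a v, 0 ≤ χ a v := by
    intro a v; rcases hχ01 a v with h | h <;> simp [h]
  have hχle : ∀ a v, χ a v ≤ 1 := by
    intro a v; rcases hχ01 a v with h | h <;> simp [h]
  have happ : ∀ (a b : G) (v : V), ρ (a * b) v = ρ a (ρ b v) := by
    intro a b v; rw [map_mul]; rfl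
  have hcancel : ∀ (a : G) (v : V), ρ a (ρ (a⁻¹) v) = v := by
    intro a v
    have h : ρ (a * a⁻¹) v = ρ a (ρ (a⁻¹) v) := happ _ _ _
    rw [← h, mul_inv_cancel, map_one]; rfl
  have hcancel' : ∀ (a : G) (v : V), ρ (a⁻¹) (ρ a v) = v := by
    intro a v
    have := hcancel (a⁻¹) v
    rwa [inv_inv] at this
  have hχmul : ∀ (a b : G) (v : V), χ (a * b) v = χ b (ρ (a⁻¹) v) := by
    intro a b v
    have h : ρ ((a * b)⁻¹) v = ρ (b⁻¹) (ρ (a⁻¹) v) := by rw [mul_inv_rev, happ]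
    simp only [hχdef, h]
  -- membership helpers
  have hA3 : ∀ {a : G}, a ∈ A → a ∈ A * A * A := by
    intro a ha
    have := Finset.mul_mem_mul (Finset.mul_mem_mul ha hA1) hA1
    simpa using this
  have hA3' : ∀ {x : G}, x ∈ A * A → x ∈ A * A * A := by
    intro x hx
    have := Finset.mul_mem_mul hx hA1
    simpa using this
  have hAmem_inv : ∀ {b : G}, b ∈ A → b⁻¹ ∈ A := by
    intro b hb; rw [← hAinv]; exact Finset.inv_mem_inv hb
  have hA3'' : ∀ {b c : G}, b ∈ A → c ∈ A * A → b⁻¹ * c ∈ A * A * A := by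
    intro b c hb hc
    have h1 : b⁻¹ * c ∈ A * (A * A) := Finset.mul_mem_mul (hAmem_inv hb) hc
    rwa [← mul_assoc] at h1
  -- support of χ
  have hχsupp : ∀ a ∈ A * A * A, ∀ v : V, χ a v ≠ 0 → v ∈ W := by
    intro a ha v h
    have hv : ρ (a⁻¹) v ∈ E := by
      by_contra hc; exact h (by simp only [hχdef]; rw [if_neg hc])
    have := hW a ha _ hv
    rwa [hcancel] at this
  -- row sums
  have hrow : ∀ a ∈ A * A * A, ∑ v ∈ W, χ a v = (E.card : ℝ) := by
    intro a ha
    simp only [hχdef]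
    rw [Finset.sum_boole]
    congr 1
    have himg : W.filter (fun v => ρ (a⁻¹) v ∈ E) = E.image (fun w => ρ a w) := by
      ext v
      simp only [Finset.mem_filter, Finset.mem_image]
      constructor
      · rintro ⟨hvW, hvE⟩
        exact ⟨ρ (a⁻¹) v, hvE, hcancel a v⟩
      · rintro ⟨w, hw, rfl⟩
        exact ⟨hW a ha w hw, by rw [hcancel']; exact hw⟩
    rw [himg, Finset.card_image_of_injective _ (Multiplicative.toAdd (ρ a)).injective]
  set H : V → ℝ := fun v => ∑ a ∈ A, χ a v with hHdef
  have hHsum : ∑ v ∈ W, H v = (A.card : ℝ) * E.card := by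
    rw [Finset.sum_comm]
    rw [Finset.sum_congr rfl (fun a ha => hrow a (hA3 ha))]
    rw [Finset.sum_const, nsmul_eq_mul]
  set τ : ℝ := 2 * k * (A.card : ℝ) ^ 2 * E.card with hτdef
  have hτpos : 0 < τ := by positivity
  set piA := Fintype.piFinset (fun _ : Fin k => A) with hpiAdef
  set Tt : (Fin k → G) → V → ℝ := fun t v => ∑ i : Fin k, χ (t i) v with hTtdef
  set Q : (Fin k → G) → ℝ := fun t => ∑ v ∈ W, ((A.card : ℝ) * Tt t v - k * H v) ^ 2 with hQdef
  -- step 1 : total variance bound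
  have hQsum : ∑ t ∈ piA, Q t ≤ (A.card : ℝ) ^ k * (τ / 2) := by
    have hswap : ∑ t ∈ piA, Q t
        = ∑ v ∈ W, ∑ t ∈ piA, ((A.card : ℝ) * Tt t v - k * H v) ^ 2 := by
      simp only [hQdef]; exact Finset.sum_comm
    rw [hswap]
    have hv : ∀ v ∈ W, ∑ t ∈ piA, ((A.card : ℝ) * Tt t v - k * H v) ^ 2
        ≤ (k : ℝ) * (A.card : ℝ) ^ (k + 1) * H v := by
      intro v _
      exact var_bound hk1 A (fun a => χ a v) (fun a => hχ01 a v)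
    calc ∑ v ∈ W, ∑ t ∈ piA, ((A.card : ℝ) * Tt t v - k * H v) ^ 2
        ≤ ∑ v ∈ W, (k : ℝ) * (A.card : ℝ) ^ (k + 1) * H v := Finset.sum_le_sum hv
      _ = (k : ℝ) * (A.card : ℝ) ^ (k + 1) * ((A.card : ℝ) * E.card) := by
          rw [← Finset.mul_sum, hHsum]
      _ = (A.card : ℝ) ^ k * (τ / 2) := by rw [hτdef]; ring
  -- step 2 : most tuples are good
  set Good := piA.filter (fun t => Q t ≤ τ) with hGooddef
  have hpiAcard : (piA.card : ℝ) = (A.card : ℝ) ^ k := by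
    rw [hpiAdef, Fintype.card_piFinset]
    push_cast [Finset.prod_const]
    simp
  have hGood : (piA.card : ℝ) ≤ 2 * Good.card := by
    set Bad := piA.filter (fun t => ¬ Q t ≤ τ) with hBaddef
    have hsplit : Good.card + Bad.card = piA.card :=
      Finset.card_filter_add_card_filter_not (fun t => Q t ≤ τ)
    have h1 : (Bad.card : ℝ) * τ ≤ ∑ t ∈ Bad, Q t := by
      have := Finset.card_nsmul_le_sum Bad Q τ
        (fun t ht => (not_le.1 (Finset.mem_filter.1 ht).2).le)
      simpa [nsmul_eq_mul] using this
    have h2 : ∑ t ∈ Bad, Q t ≤ ∑ t ∈ piA, Q t := by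
      apply Finset.sum_le_sum_of_subset_of_nonneg (Finset.filter_subset _ _)
      intro t _ _
      simp only [hQdef]
      exact Finset.sum_nonneg fun v _ => sq_nonneg _
    have hBadle : (Bad.card : ℝ) * τ ≤ (piA.card : ℝ) * (τ / 2) := by
      rw [hpiAcard]
      exact h1.trans (h2.trans hQsum)
    have hBad2 : (Bad.card : ℝ) ≤ (piA.card : ℝ) / 2 := by
      have h3 : (Bad.card : ℝ) * τ ≤ ((piA.card : ℝ) / 2) * τ := by
        rw [mul_comm ((piA.card : ℝ) / 2) τ]
        rw [mul_comm (Bad.card : ℝ) τ]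
        rw [mul_comm (piA.card : ℝ) (τ / 2)] at hBadle
        calc τ * (Bad.card : ℝ) = (Bad.card : ℝ) * τ := by ring
          _ ≤ τ / 2 * (piA.card : ℝ) := hBadle
          _ = τ * ((piA.card : ℝ) / 2) := by ring
      exact le_of_mul_le_mul_right h3 hτpos
    have hcast : (piA.card : ℝ) = (Good.card : ℝ) + Bad.card := by exact_mod_cast hsplit.symm
    linarith
  -- step 3 : pigeonhole
  set piAA := Fintype.piFinset (fun _ : Fin k => A * A) with hpiAAdef
  obtain ⟨z, hz, B, hBsub, hBgood, hBcard⟩ :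
      ∃ z ∈ piAA, ∃ B : Finset G, B ⊆ A ∧
        (∀ b ∈ B, (fun i => b⁻¹ * z i) ∈ Good) ∧
        (A.card : ℝ) ≤ 2 * K ^ k * B.card := by
    set φ : G × (Fin k → G) → (Fin k → G) := fun p i => p.1 * p.2 i with hφdef
    set D := A ×ˢ Good with hDdef
    have hGoodsub : Good ⊆ piA := Finset.filter_subset _ _
    have hmaps : ∀ p ∈ D, φ p ∈ piAA := by
      intro p hp
      rcases Finset.mem_product.1 hp with ⟨hp1, hp2⟩
      rw [hpiAAdef, Fintype.mem_piFinset]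
      intro i
      exact Finset.mul_mem_mul hp1 (Fintype.mem_piFinset.1 (hGoodsub hp2) i)
    have hcount := Finset.card_eq_sum_card_fiberwise hmaps
    have hpiAAne : piAA.Nonempty := by
      refine ⟨fun _ => 1 * 1, ?_⟩
      rw [hpiAAdef, Fintype.mem_piFinset]
      intro i
      exact Finset.mul_mem_mul hA1 hA1
    have hpiAA0 : (0:ℝ) < piAA.card := by exact_mod_cast Finset.card_pos.2 hpiAAne
    obtain ⟨z, hz, hzcard⟩ : ∃ z ∈ piAA,
        (D.card : ℝ) / piAA.card ≤ ((D.filter (fun p => φ p = z)).card : ℝ) := by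
      apply Finset.exists_le_of_sum_le hpiAAne
      rw [Finset.sum_const, nsmul_eq_mul, mul_div_cancel₀ _ (ne_of_gt hpiAA0)]
      exact le_of_eq (by exact_mod_cast hcount)
    refine ⟨z, hz, A.filter (fun b => (fun i => b⁻¹ * z i) ∈ Good),
      Finset.filter_subset _ _, fun b hb => (Finset.mem_filter.1 hb).2, ?_⟩
    set Bz := A.filter (fun b => (fun i => b⁻¹ * z i) ∈ Good) with hBzdef
    have hfib : ((D.filter (fun p => φ p = z)).card : ℝ) ≤ (Bz.card : ℝ) := by
      have : (D.filter (fun p => φ p = z)).card ≤ Bz.card := by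
        apply Finset.card_le_card_of_injOn (fun p => p.1)
        · intro p hp
          rcases Finset.mem_filter.1 hp with ⟨hpD, hpz⟩
          rcases Finset.mem_product.1 hpD with ⟨hp1, hp2⟩
          refine Finset.mem_filter.2 ⟨hp1, ?_⟩
          have heq : (fun i => p.1⁻¹ * z i) = p.2 := by
            funext i
            have : p.1 * p.2 i = z i := congrFun hpz i
            rw [← this, inv_mul_cancel_left]
          rw [heq]; exact hp2
        · intro p hp q hq hpq
          simp only [Finset.coe_filter, Set.mem_setOf_eq] at hp hq
          have h2 : p.2 = q.2 := by
            funext i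
            have e1 : p.1 * p.2 i = z i := congrFun hp.2 i
            have e2 : q.1 * q.2 i = z i := congrFun hq.2 i
            simp only at hpq
            rw [hpq] at e1
            exact mul_left_cancel (e1.trans e2.symm)
          exact Prod.ext hpq h2
      exact_mod_cast this
    have hDcard : (D.card : ℝ) = (A.card : ℝ) * Good.card := by
      rw [hDdef, Finset.card_product]; push_cast; ring
    have hpiAAcard : (piAA.card : ℝ) ≤ (K * A.card) ^ k := by
      have hc : (piAA.card : ℝ) = ((A * A).card : ℝ) ^ k := by
        rw [hpiAAdef, Fintype.card_piFinset, Finset.prod_const, Finset.card_univ,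
          Fintype.card_fin]
        push_cast
        ring
      rw [hc]
      exact pow_le_pow_left₀ (Nat.cast_nonneg _) hAA k
    have hpow : (0:ℝ) < (A.card : ℝ) ^ k := pow_pos hnR k
    have hchain : (A.card : ℝ) * (A.card : ℝ) ^ k
        ≤ (2 * K ^ k * Bz.card) * (A.card : ℝ) ^ k := by
      have hBz0 : (0:ℝ) ≤ (Bz.card : ℝ) := Nat.cast_nonneg _
      calc (A.card : ℝ) * (A.card : ℝ) ^ k
          = (A.card : ℝ) * piA.card := by rw [hpiAcard]
        _ ≤ (A.card : ℝ) * (2 * Good.card) := by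
            apply mul_le_mul_of_nonneg_left hGood (le_of_lt hnR)
        _ = 2 * D.card := by rw [hDcard]; ring
        _ ≤ 2 * (piAA.card * Bz.card) := by
            have hD : (D.card : ℝ) ≤ (piAA.card : ℝ) * Bz.card := by
              have := (div_le_iff₀ hpiAA0).1 hzcard
              calc (D.card : ℝ) ≤ ((D.filter (fun p => φ p = z)).card : ℝ) * piAA.card := this
                _ ≤ (Bz.card : ℝ) * piAA.card := by
                    apply mul_le_mul_of_nonneg_right hfib (le_of_lt hpiAA0)
                _ = (piAA.card : ℝ) * Bz.card := by ring
            linarith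
        _ ≤ 2 * ((K * A.card) ^ k * Bz.card) := by
            apply mul_le_mul_of_nonneg_left _ (by norm_num : (0:ℝ) ≤ 2)
            exact mul_le_mul_of_nonneg_right hpiAAcard hBz0
        _ = (2 * K ^ k * Bz.card) * (A.card : ℝ) ^ k := by rw [mul_pow]; ring
    exact le_of_mul_le_mul_right hchain hpow
  have hBne : B.Nonempty := by
    rw [← Finset.card_pos]
    by_contra hcontra
    push_neg at hcontra
    have h0 : (B.card : ℝ) = 0 := by exact_mod_cast Nat.le_zero.1 hcontra
    rw [h0, mul_zero] at hBcard
    linarith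
  have hzmem : ∀ i, z i ∈ A * A := by
    have h := hz
    rw [hpiAAdef, Fintype.mem_piFinset] at h
    exact h
  set Tb : G → V → ℝ := fun b v => ∑ i : Fin k, χ (b⁻¹ * z i) v with hTbdef
  have hQb : ∀ b ∈ B, ∑ v ∈ W, ((A.card : ℝ) * Tb b v - k * H v) ^ 2 ≤ τ := by
    intro b hb
    have h := hBgood b hb
    rw [hGooddef, Finset.mem_filter] at h
    have h2 := h.2
    simpa [hQdef, hTtdef, hTbdef] using h2
  have hL1 : ∀ b ∈ B, ∑ v ∈ W, |(A.card : ℝ) * Tb b v - k * H v|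
      ≤ (A.card : ℝ) * E.card * Real.sqrt (2 * k * K) := by
    intro b hb
    set f : V → ℝ := fun v => (A.card : ℝ) * Tb b v - k * H v with hfdef
    have hcs : (∑ v ∈ W, |f v|) ^ 2 ≤ (∑ v ∈ W, (f v) ^ 2) * W.card := by
      have h := Finset.sum_mul_sq_le_sq_mul_sq W (fun v => |f v|) (fun _ => (1:ℝ))
      simp only [mul_one, one_pow, sq_abs] at h
      calc (∑ v ∈ W, |f v|) ^ 2 ≤ (∑ v ∈ W, (f v) ^ 2) * (∑ _v ∈ W, (1:ℝ)) := h
        _ = (∑ v ∈ W, (f v) ^ 2) * W.card := by rw [Finset.sum_const, nsmul_eq_mul, mul_one]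
    have hQW : ∑ v ∈ W, (f v) ^ 2 ≤ τ := hQb b hb
    have h2 : (∑ v ∈ W, |f v|) ^ 2 ≤ (2 * k * K) * ((A.card : ℝ) * E.card) ^ 2 := by
      calc (∑ v ∈ W, |f v|) ^ 2 ≤ (∑ v ∈ W, (f v) ^ 2) * W.card := hcs
        _ ≤ τ * W.card := mul_le_mul_of_nonneg_right hQW (Nat.cast_nonneg _)
        _ ≤ τ * (K * E.card) := mul_le_mul_of_nonneg_left hWcard (le_of_lt hτpos)
        _ = (2 * k * K) * ((A.card : ℝ) * E.card) ^ 2 := by rw [hτdef]; ring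
    have habs : (0:ℝ) ≤ ∑ v ∈ W, |f v| := Finset.sum_nonneg fun _ _ => abs_nonneg _
    have h3 : ∑ v ∈ W, |f v| ≤ Real.sqrt ((2 * k * K) * ((A.card : ℝ) * E.card) ^ 2) := by
      rw [← Real.sqrt_sq habs]
      exact Real.sqrt_le_sqrt h2
    have h4 : Real.sqrt ((2 * k * K) * ((A.card : ℝ) * E.card) ^ 2)
        = (A.card : ℝ) * E.card * Real.sqrt (2 * k * K) := by
      rw [Real.sqrt_mul (mul_nonneg (mul_nonneg (by norm_num) hkR.le) hK0.le),
        Real.sqrt_sq (mul_nonneg hnR.le heR.le)]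
      ring
    rw [h4] at h3
    exact h3
  set Δ : ℝ := (k : ℝ) * A.card / (2 * K * m) with hΔdef
  have hΔpos : 0 < Δ := by
    apply div_pos (mul_pos hkR hnR)
    have := mul_pos (mul_pos (by norm_num : (0:ℝ) < 2) hK0) hmR
    exact this
  set Db : ℕ → Finset V := fun j => W.filter
    (fun w => ((j:ℝ) - 1) * Δ < (k:ℝ) * H w ∧ (k:ℝ) * H w ≤ ((j:ℝ) + 1) * Δ) with hDbdef
  have hHnn : ∀ v, 0 ≤ H v := fun v => Finset.sum_nonneg fun a _ => hχ0 a v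
  have hband2 : ∀ w ∈ W, ((Finset.Icc 1 m).filter (fun j => w ∈ Db j)).card ≤ 2 := by
    intro w _
    set y : ℝ := (k:ℝ) * H w / Δ with hydef
    have hsub : (Finset.Icc 1 m).filter (fun j => w ∈ Db j)
        ⊆ Finset.Icc (⌈y⌉₊ - 1) ⌈y⌉₊ := by
      intro j hj
      rcases Finset.mem_filter.1 hj with ⟨hjIcc, hjD⟩
      rcases Finset.mem_Icc.1 hjIcc with ⟨hj1, _⟩
      have hjD' := (Finset.mem_filter.1 hjD).2
      obtain ⟨hlow, hhigh⟩ := hjD'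
      rw [Finset.mem_Icc]
      constructor
      · have hy1 : y ≤ (j:ℝ) + 1 := by rw [hydef, div_le_iff₀ hΔpos]; linarith
        have hy2 : ⌈y⌉₊ ≤ j + 1 := Nat.ceil_le.2 (by push_cast; linarith)
        omega
      · have hlt : (j:ℝ) - 1 < y := by rw [hydef, lt_div_iff₀ hΔpos]; linarith
        by_contra hcon
        push_neg at hcon
        have hcle : ⌈y⌉₊ ≤ j - 1 := by omega
        have hcle' : (⌈y⌉₊ : ℝ) ≤ (j:ℝ) - 1 := by
          calc (⌈y⌉₊ : ℝ) ≤ ((j - 1 : ℕ) : ℝ) := by exact_mod_cast hcle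
            _ = (j:ℝ) - 1 := by push_cast [Nat.cast_sub hj1]; ring
        have hyle : y ≤ (⌈y⌉₊ : ℝ) := Nat.le_ceil y
        linarith
    calc ((Finset.Icc 1 m).filter (fun j => w ∈ Db j)).card
        ≤ (Finset.Icc (⌈y⌉₊ - 1) ⌈y⌉₊).card := Finset.card_le_card hsub
      _ ≤ 2 := by rw [Nat.card_Icc]; omega
  have hbandsum : ∑ j ∈ Finset.Icc 1 m, (Db j).card ≤ 2 * W.card := by
    have h1 : ∀ jj : ℕ, (Db jj).card = ∑ w ∈ W, (if w ∈ Db jj then 1 else 0) := by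
      intro jj
      rw [← Finset.card_filter]
      congr 1
      ext w
      simp only [Finset.mem_filter]
      exact ⟨fun hw => ⟨(Finset.mem_filter.1 hw).1, hw⟩, fun h => h.2⟩
    have hswap : ∑ j ∈ Finset.Icc 1 m, (Db j).card
        = ∑ w ∈ W, ((Finset.Icc 1 m).filter (fun j => w ∈ Db j)).card := by
      rw [Finset.sum_congr rfl (fun j _ => h1 j), Finset.sum_comm]
      exact Finset.sum_congr rfl fun w _ => (Finset.card_filter _ _).symm
    rw [hswap]
    calc ∑ w ∈ W, ((Finset.Icc 1 m).filter (fun j => w ∈ Db j)).card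
        ≤ ∑ _w ∈ W, 2 := Finset.sum_le_sum hband2
      _ = 2 * W.card := by rw [Finset.sum_const, smul_eq_mul]; ring
  obtain ⟨j, hjIcc, hjD⟩ : ∃ j ∈ Finset.Icc 1 m, ((Db j).card : ℝ) ≤ 2 * K * E.card / m := by
    have hIccne : (Finset.Icc 1 m).Nonempty := ⟨1, Finset.mem_Icc.2 ⟨le_refl 1, hm1⟩⟩
    apply Finset.exists_le_of_sum_le hIccne
    have hl : ∑ j ∈ Finset.Icc 1 m, ((Db j).card : ℝ) ≤ 2 * K * E.card := by
      calc ∑ j ∈ Finset.Icc 1 m, ((Db j).card : ℝ)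
          = ((∑ j ∈ Finset.Icc 1 m, (Db j).card : ℕ) : ℝ) := by push_cast; rfl
        _ ≤ ((2 * W.card : ℕ) : ℝ) := by exact_mod_cast hbandsum
        _ = 2 * (W.card : ℝ) := by push_cast; ring
        _ ≤ 2 * (K * E.card) := by linarith
        _ = 2 * K * E.card := by ring
    have hr : ∑ _j ∈ Finset.Icc 1 m, (2 * K * E.card / m) = 2 * K * E.card := by
      rw [Finset.sum_const, nsmul_eq_mul, Nat.card_Icc]
      have : ((m + 1 - 1 : ℕ) : ℝ) = (m : ℝ) := by push_cast; ring
      rw [this]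
      field_simp
    rw [hr]
    exact hl
  rcases Finset.mem_Icc.1 hjIcc with ⟨hj1, hjm⟩
  set θ : ℝ := (j:ℝ) * Δ with hθdef
  have hj0R : (0:ℝ) < (j:ℝ) := by exact_mod_cast Nat.lt_of_lt_of_le Nat.zero_lt_one hj1
  have hθpos : 0 < θ := mul_pos hj0R hΔpos
  have hθle : θ ≤ (k:ℝ) * A.card / (2 * K) := by
    have hjmR : (j:ℝ) ≤ (m:ℝ) := by exact_mod_cast hjm
    have hexp : θ = (j:ℝ) / m * ((k:ℝ) * A.card / (2 * K)) := by
      rw [hθdef, hΔdef, div_mul_div_comm, mul_div_assoc']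
      rw [mul_comm (m:ℝ) (2 * K)]
    rw [hexp]
    have hfrac : (j:ℝ) / m ≤ 1 := (div_le_one hmR).2 hjmR
    have hX : (0:ℝ) ≤ (k:ℝ) * A.card / (2 * K) := div_nonneg (mul_nonneg hkR.le hnR.le) (by linarith)
    calc (j:ℝ) / m * ((k:ℝ) * A.card / (2 * K))
        ≤ 1 * ((k:ℝ) * A.card / (2 * K)) := mul_le_mul_of_nonneg_right hfrac hX
      _ = (k:ℝ) * A.card / (2 * K) := one_mul _
  set Tz : V → ℝ := fun v => ∑ i : Fin k, χ (z i) v with hTzdef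
  have hTznn : ∀ v, 0 ≤ Tz v := fun v => Finset.sum_nonneg fun i _ => hχ0 _ _
  have hTzle : ∀ v, Tz v ≤ (k:ℝ) := by
    intro v
    calc Tz v ≤ ∑ _i : Fin k, (1:ℝ) := Finset.sum_le_sum fun i _ => hχle _ _
      _ = (k:ℝ) := by rw [Finset.sum_const, Finset.card_univ, Fintype.card_fin, nsmul_eq_mul, mul_one]
  have hTzsupp : ∀ v, v ∉ W → Tz v = 0 := by
    intro v hv
    apply Finset.sum_eq_zero
    intro i _
    by_contra h
    exact hv (hχsupp (z i) (hA3' (hzmem i)) v h)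
  have hTzsum : ∑ v ∈ W, Tz v = (k:ℝ) * E.card := by
    rw [hTzdef, Finset.sum_comm]
    rw [Finset.sum_congr rfl (fun i _ => hrow (z i) (hA3' (hzmem i)))]
    rw [Finset.sum_const, Finset.card_univ, Fintype.card_fin, nsmul_eq_mul]
  set E' := W.filter (fun v => θ < (A.card : ℝ) * Tz v) with hE'def
  have hE'sub : ∀ v ∈ E', ∃ g ∈ A * A, ∃ w ∈ E, ρ g w = v := by
    intro v hv
    rcases Finset.mem_filter.1 hv with ⟨hvW, hvθ⟩
    have hTzne : Tz v ≠ 0 := by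
      intro h0
      rw [hTzdef] at h0
      have : (A.card : ℝ) * Tz v = 0 := by rw [hTzdef, h0, mul_zero]
      rw [this] at hvθ
      linarith
    have hTzne' : ∑ i : Fin k, χ (z i) v ≠ 0 := hTzne
    obtain ⟨i, _, hi⟩ := Finset.exists_ne_zero_of_sum_ne_zero hTzne'
    have hiE : ρ ((z i)⁻¹) v ∈ E := by
      by_contra hcon
      exact hi (by simp only [hχdef]; rw [if_neg hcon])
    exact ⟨z i, hzmem i, ρ ((z i)⁻¹) v, hiE, hcancel _ _⟩
  have hE'size : (E.card : ℝ) ≤ 2 * E'.card := by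
    have hsplit := Finset.sum_filter_add_sum_filter_not W
      (fun v => θ < (A.card : ℝ) * Tz v) (fun v => (A.card : ℝ) * Tz v)
    have h1 : ∑ v ∈ E', (A.card : ℝ) * Tz v ≤ (E'.card : ℝ) * ((A.card : ℝ) * k) := by
      have := Finset.sum_le_card_nsmul E' (fun v => (A.card : ℝ) * Tz v) ((A.card : ℝ) * k)
        (fun v _ => mul_le_mul_of_nonneg_left (hTzle v) (le_of_lt hnR))
      simpa [nsmul_eq_mul] using this
    have h2 : ∑ v ∈ W.filter (fun v => ¬ θ < (A.card : ℝ) * Tz v), (A.card : ℝ) * Tz v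
        ≤ (W.card : ℝ) * θ := by
      have hstep := Finset.sum_le_card_nsmul (W.filter (fun v => ¬ θ < (A.card : ℝ) * Tz v))
        (fun v => (A.card : ℝ) * Tz v) θ (fun v hv => not_lt.1 (Finset.mem_filter.1 hv).2)
      have hcle : ((W.filter (fun v => ¬ θ < (A.card : ℝ) * Tz v)).card : ℝ) ≤ (W.card : ℝ) := by
        exact_mod_cast Finset.card_filter_le _ _
      calc ∑ v ∈ W.filter (fun v => ¬ θ < (A.card : ℝ) * Tz v), (A.card : ℝ) * Tz v
          ≤ ((W.filter (fun v => ¬ θ < (A.card : ℝ) * Tz v)).card : ℝ) * θ := by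
            simpa [nsmul_eq_mul] using hstep
        _ ≤ (W.card : ℝ) * θ := mul_le_mul_of_nonneg_right hcle hθpos.le
    have hWθ : (W.card : ℝ) * θ ≤ (k:ℝ) * A.card * E.card / 2 := by
      calc (W.card : ℝ) * θ ≤ (K * E.card) * θ := mul_le_mul_of_nonneg_right hWcard hθpos.le
        _ ≤ (K * E.card) * ((k:ℝ) * A.card / (2 * K)) :=
            mul_le_mul_of_nonneg_left hθle (mul_nonneg hK0.le heR.le)
        _ = (k:ℝ) * A.card * E.card / 2 := by
            have h2K : (2 * K) ≠ 0 := by positivity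
            rw [mul_div_assoc', div_eq_div_iff h2K (by norm_num : (2:ℝ) ≠ 0)]
            ring
    have htot : (k:ℝ) * A.card * E.card = ∑ v ∈ W, (A.card : ℝ) * Tz v := by
      rw [← Finset.mul_sum, hTzsum]; ring
    have hnk : (0:ℝ) < (A.card : ℝ) * k := mul_pos hnR hkR
    have hhalf : (E.card : ℝ) / 2 * ((A.card : ℝ) * k) ≤ (E'.card : ℝ) * ((A.card : ℝ) * k) := by
      have : (k:ℝ) * A.card * E.card ≤ (E'.card : ℝ) * ((A.card : ℝ) * k) + (W.card : ℝ) * θ := by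
        rw [htot, ← hsplit]
        exact add_le_add h1 h2
      have h3 : (E.card : ℝ) / 2 * ((A.card : ℝ) * k) = (k:ℝ) * A.card * E.card / 2 := by ring
      linarith
    have := le_of_mul_le_mul_right hhalf hnk
    linarith
  have hinv : ∀ g ∈ B * B⁻¹,
      (((E'.image fun v => ρ g v) \ E').card : ℝ) ≤ ε * E'.card := by
    intro g hg
    rw [Finset.mem_mul] at hg
    obtain ⟨b', hb', c, hc, hmulg⟩ := hg
    rw [Finset.mem_inv] at hc
    obtain ⟨b, hb, rfl⟩ := hc
    subst hmulg
    have hbA : b ∈ A := hBsub hb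
    set S := E'.filter (fun u => ρ (b' * b⁻¹) u ∉ E') with hSdef
    have himg : (E'.image fun v => ρ (b' * b⁻¹) v) \ E'
        ⊆ S.image (fun v => ρ (b' * b⁻¹) v) := by
      intro v hv
      rcases Finset.mem_sdiff.1 hv with ⟨hv1, hv2⟩
      rcases Finset.mem_image.1 hv1 with ⟨u, hu, rfl⟩
      exact Finset.mem_image.2 ⟨u, Finset.mem_filter.2 ⟨hu, hv2⟩, rfl⟩
    have hcard1 : (((E'.image fun v => ρ (b' * b⁻¹) v) \ E').card : ℝ) ≤ (S.card : ℝ) := by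
      have h := Finset.card_le_card himg
      rw [Finset.card_image_of_injective _ (Multiplicative.toAdd (ρ (b' * b⁻¹))).injective] at h
      exact_mod_cast h
    set P := W.filter (fun w => θ < (A.card : ℝ) * Tb b w ∧ (A.card : ℝ) * Tb b' w ≤ θ)
      with hPdef
    have hkey1 : ∀ u : V, Tb b (ρ (b⁻¹) u) = Tz u := by
      intro u
      apply Finset.sum_congr rfl
      intro i _
      rw [hχmul (b⁻¹) (z i), inv_inv, hcancel]
    have hkey2 : ∀ u : V, Tb b' (ρ (b⁻¹) u) = Tz (ρ (b' * b⁻¹) u) := by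
      intro u
      apply Finset.sum_congr rfl
      intro i _
      rw [hχmul (b'⁻¹) (z i), inv_inv, ← happ]
    have hStoP : S.image (fun u => ρ (b⁻¹) u) ⊆ P := by
      intro w hw
      rcases Finset.mem_image.1 hw with ⟨u, hu, rfl⟩
      rcases Finset.mem_filter.1 hu with ⟨huE', hunot⟩
      rcases Finset.mem_filter.1 huE' with ⟨huW, huθ⟩
      refine Finset.mem_filter.2 ⟨?_, ?_, ?_⟩
      · obtain ⟨c₀, hc₀, e, he, hceu⟩ := hE'sub u huE'
        have heq : ρ (b⁻¹) u = ρ (b⁻¹ * c₀) e := by rw [happ, hceu]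
        rw [heq]
        exact hW _ (hA3'' hbA hc₀) e he
      · rw [hkey1 u]; exact huθ
      · rw [hkey2 u]
        by_cases hgu : ρ (b' * b⁻¹) u ∈ W
        · have hnlt : ¬ θ < (A.card : ℝ) * Tz (ρ (b' * b⁻¹) u) := by
            intro hlt
            exact hunot (Finset.mem_filter.2 ⟨hgu, hlt⟩)
          exact not_lt.1 hnlt
        · rw [hTzsupp _ hgu, mul_zero]; exact hθpos.le
    have hcard2 : (S.card : ℝ) ≤ (P.card : ℝ) := by
      have h : S.card = (S.image (fun u => ρ (b⁻¹) u)).card :=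
        (Finset.card_image_of_injective _ (Multiplicative.toAdd (ρ (b⁻¹))).injective).symm
      rw [h]
      exact_mod_cast Finset.card_le_card hStoP
    set P1 := W.filter (fun w => Δ < (A.card : ℝ) * Tb b w - (k:ℝ) * H w) with hP1def
    set P2 := W.filter (fun w => Δ < (k:ℝ) * H w - (A.card : ℝ) * Tb b' w) with hP2def
    have hPsub : P ⊆ Db j ∪ P1 ∪ P2 := by
      intro w hw
      rcases Finset.mem_filter.1 hw with ⟨hwW, hw1, hw2⟩
      by_cases hcase1 : (k:ℝ) * H w ≤ ((j:ℝ) - 1) * Δ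
      · apply Finset.mem_union_left
        apply Finset.mem_union_right
        refine Finset.mem_filter.2 ⟨hwW, ?_⟩
        have hθeq : θ = ((j:ℝ) - 1) * Δ + Δ := by rw [hθdef]; ring
        linarith
      · by_cases hcase2 : (k:ℝ) * H w ≤ ((j:ℝ) + 1) * Δ
        · apply Finset.mem_union_left
          apply Finset.mem_union_left
          exact Finset.mem_filter.2 ⟨hwW, not_le.1 hcase1, hcase2⟩
        · apply Finset.mem_union_right
          refine Finset.mem_filter.2 ⟨hwW, ?_⟩
          have hθeq : θ = ((j:ℝ) + 1) * Δ - Δ := by rw [hθdef]; ring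
          linarith [not_le.1 hcase2]
    have hP1card : (P1.card : ℝ) * Δ ≤ (A.card : ℝ) * E.card * Real.sqrt (2 * k * K) := by
      have hle : (P1.card : ℝ) * Δ ≤ ∑ w ∈ P1, ((A.card : ℝ) * Tb b w - (k:ℝ) * H w) := by
        have := Finset.card_nsmul_le_sum P1 (fun w => (A.card : ℝ) * Tb b w - (k:ℝ) * H w) Δ
          (fun w hw => (Finset.mem_filter.1 hw).2.le)
        simpa [nsmul_eq_mul] using this
      calc (P1.card : ℝ) * Δ ≤ ∑ w ∈ P1, ((A.card : ℝ) * Tb b w - (k:ℝ) * H w) := hle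
        _ ≤ ∑ w ∈ P1, |(A.card : ℝ) * Tb b w - (k:ℝ) * H w| :=
            Finset.sum_le_sum fun w _ => le_abs_self _
        _ ≤ ∑ w ∈ W, |(A.card : ℝ) * Tb b w - (k:ℝ) * H w| :=
            Finset.sum_le_sum_of_subset_of_nonneg (Finset.filter_subset _ _)
              (fun _ _ _ => abs_nonneg _)
        _ ≤ (A.card : ℝ) * E.card * Real.sqrt (2 * k * K) := hL1 b hb
    have hP2card : (P2.card : ℝ) * Δ ≤ (A.card : ℝ) * E.card * Real.sqrt (2 * k * K) := by
      have hle : (P2.card : ℝ) * Δ ≤ ∑ w ∈ P2, ((k:ℝ) * H w - (A.card : ℝ) * Tb b' w) := by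
        have := Finset.card_nsmul_le_sum P2 (fun w => (k:ℝ) * H w - (A.card : ℝ) * Tb b' w) Δ
          (fun w hw => (Finset.mem_filter.1 hw).2.le)
        simpa [nsmul_eq_mul] using this
      calc (P2.card : ℝ) * Δ ≤ ∑ w ∈ P2, ((k:ℝ) * H w - (A.card : ℝ) * Tb b' w) := hle
        _ ≤ ∑ w ∈ P2, |(A.card : ℝ) * Tb b' w - (k:ℝ) * H w| :=
            Finset.sum_le_sum fun w _ => by rw [abs_sub_comm]; exact le_abs_self _
        _ ≤ ∑ w ∈ W, |(A.card : ℝ) * Tb b' w - (k:ℝ) * H w| :=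
            Finset.sum_le_sum_of_subset_of_nonneg (Finset.filter_subset _ _)
              (fun _ _ _ => abs_nonneg _)
        _ ≤ (A.card : ℝ) * E.card * Real.sqrt (2 * k * K) := hL1 b' hb'
    have hPcard : (P.card : ℝ) ≤ ((Db j).card : ℝ) + P1.card + P2.card := by
      have h := Finset.card_le_card hPsub
      have h2 := Finset.card_union_le (Db j ∪ P1) P2
      have h3 := Finset.card_union_le (Db j) P1
      have : P.card ≤ (Db j).card + P1.card + P2.card := by omega
      exact_mod_cast this
    -- numeric bound on P1, P2
    have hsq : (0:ℝ) ≤ Real.sqrt (2 * k * K) := Real.sqrt_nonneg _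
    have hPi : ∀ X : ℝ, 0 ≤ X → X * Δ ≤ (A.card : ℝ) * E.card * Real.sqrt (2 * k * K) →
        X ≤ ε / 8 * E.card := by
      intro X hX hXle
      have hkey : (A.card : ℝ) * E.card * Real.sqrt (2 * k * K) ≤ (ε / 8 * E.card) * Δ := by
        have h16 : 16 * K * m * Real.sqrt (2 * k * K) ≤ ε * k := by linarith
        have h16Km : (0:ℝ) < 16 * K * m := by
          have := mul_pos (mul_pos (by norm_num : (0:ℝ) < 16) hK0) hmR
          linarith
        have hre : (ε / 8 * (E.card : ℝ)) * Δ
            = ((E.card : ℝ) * A.card * (ε * k)) / (16 * K * m) := by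
          rw [hΔdef, ← mul_div_assoc,
            div_eq_div_iff (mul_pos (mul_pos (by norm_num : (0:ℝ) < 2) hK0) hmR).ne' h16Km.ne']
          ring
        rw [hre, le_div_iff₀ h16Km]
        have hint := mul_le_mul_of_nonneg_left h16 (mul_nonneg hnR.le heR.le)
        linarith [hint]
      have := hXle.trans hkey
      exact le_of_mul_le_mul_right this hΔpos
    have hP1' : (P1.card : ℝ) ≤ ε / 8 * E.card := hPi _ (Nat.cast_nonneg _) hP1card
    have hP2' : (P2.card : ℝ) ≤ ε / 8 * E.card := hPi _ (Nat.cast_nonneg _) hP2card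
    have hDb' : ((Db j).card : ℝ) ≤ ε / 4 * E.card := by
      calc ((Db j).card : ℝ) ≤ 2 * K * E.card / m := hjD
        _ = 2 * (K / m) * E.card := by ring
        _ ≤ 2 * (ε / 8) * E.card := by
            apply mul_le_mul_of_nonneg_right _ heR.le
            linarith
        _ = ε / 4 * E.card := by ring
    have hfinal : (S.card : ℝ) ≤ ε / 2 * E.card := by
      calc (S.card : ℝ) ≤ (P.card : ℝ) := hcard2
        _ ≤ ((Db j).card : ℝ) + P1.card + P2.card := hPcard
        _ ≤ ε / 4 * E.card + ε / 8 * E.card + ε / 8 * E.card := by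
            apply add_le_add (add_le_add hDb' hP1') hP2'
        _ = ε / 2 * E.card := by ring
    calc (((E'.image fun v => ρ (b' * b⁻¹) v) \ E').card : ℝ) ≤ (S.card : ℝ) := hcard1
      _ ≤ ε / 2 * E.card := hfinal
      _ ≤ ε * E'.card := by nlinarith [hE'size, hε.le]
  -- assemble
  have hBB : (B.card : ℝ) ≤ ((B * B⁻¹).card : ℝ) := by
    obtain ⟨b₀, hb₀⟩ := hBne
    have h1 : B.image (fun x => x * b₀⁻¹) ⊆ B * B⁻¹ := by
      intro x hx
      rcases Finset.mem_image.1 hx with ⟨y, hy, rfl⟩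
      exact Finset.mul_mem_mul hy (Finset.inv_mem_inv hb₀)
    have h2 : (B.image (fun x => x * b₀⁻¹)).card = B.card :=
      Finset.card_image_of_injective _ (mul_left_injective b₀⁻¹)
    calc (B.card : ℝ) = ((B.image (fun x => x * b₀⁻¹)).card : ℝ) := by rw [h2]
      _ ≤ ((B * B⁻¹).card : ℝ) := by exact_mod_cast Finset.card_le_card h1
  refine ⟨E', hE'sub, hE'size, B, hBsub, hBne, ?_, hinv⟩
  calc (A.card : ℝ) ≤ 2 * K ^ k * B.card := hBcard
    _ ≤ 2 * K ^ k * ((B * B⁻¹).card : ℝ) := by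
        apply mul_le_mul_of_nonneg_left hBB
        positivity

end

set_option maxHeartbeats 1000000 in
/-- **Existence of a near-invariant set.** -/
theorem near_invariant_set (K : ℝ) (hK : 1 ≤ K) :
    ∃ cK : ℝ, 0 < cK ∧
      ∀ ε : ℝ, 0 < ε →
        ∃ cKε : ℝ, 0 < cKε ∧
          ∀ (G V : Type) [Group G] [AddCommGroup V] (ρ : G →* Multiplicative (AddAut V))
            (A : Set G) (E : Set V),
            IsApproxGroup K A → E.Finite → (0 : V) ∈ E → -E = E →
            ((actImg ρ (A ^ 8) (E + E)).ncard : ℝ) ≤ K * E.ncard →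
            ∃ E' : Set V, E' ⊆ actImg ρ (A ^ 2) E ∧ cK * E.ncard ≤ E'.ncard ∧
              ∃ A' : Set G, A' ⊆ A ^ 4 ∧ (1 : G) ∈ A' ∧ A'⁻¹ = A' ∧
                cKε * A.ncard ≤ A'.ncard ∧
                ∀ a ∈ A', ((((Multiplicative.toAdd (ρ a) : AddAut V) '' E') \ E').ncard : ℝ) ≤ ε * E'.ncard := by
  have hK0 : (0:ℝ) < K := lt_of_lt_of_le one_pos hK
  refine ⟨1/2, by norm_num, ?_⟩
  intro ε hε
  -- choose the parameters m and k, depending only on K and ε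
  set m : ℕ := max 1 ⌈8 * K / ε⌉₊ with hmdef
  have hm1 : 1 ≤ m := le_max_left _ _
  have hmR : (0:ℝ) < m := by exact_mod_cast lt_of_lt_of_le Nat.zero_lt_one hm1
  have hmge : 8 * K / ε ≤ (m:ℝ) := by
    calc 8 * K / ε ≤ (⌈8 * K / ε⌉₊ : ℝ) := Nat.le_ceil _
      _ ≤ (m:ℝ) := by exact_mod_cast le_max_right 1 ⌈8 * K / ε⌉₊
  have hm : K / m ≤ ε / 8 := by
    rw [div_le_div_iff₀ hmR (by norm_num : (0:ℝ) < 8)]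
    have h8 : 8 * K ≤ (m:ℝ) * ε := by
      have := (div_le_iff₀ hε).1 hmge
      linarith
    linarith
  set c : ℝ := 512 * K^3 * (m:ℝ)^2 / ε^2 with hcdef
  set k : ℕ := max 2 ⌈c⌉₊ with hkdef
  have hk2 : 2 ≤ k := le_max_left _ _
  have hkR : (0:ℝ) < k := by
    have h0k : (0:ℕ) < k := lt_of_lt_of_le (by norm_num) hk2
    exact_mod_cast h0k
  have hkge : c ≤ (k:ℝ) := by
    calc c ≤ (⌈c⌉₊ : ℝ) := Nat.le_ceil _
      _ ≤ (k:ℝ) := by exact_mod_cast le_max_right 2 ⌈c⌉₊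
  have hkK : 4 * K * m * Real.sqrt (2 * k * K) ≤ ε / 4 * k := by
    have h16Km : (0:ℝ) < 16 * K * m := by nlinarith
    have hs : Real.sqrt (2 * k * K) ≤ ε * k / (16 * K * m) := by
      rw [show ε * k / (16 * K * m) = Real.sqrt ((ε * k / (16 * K * m))^2) from
        (Real.sqrt_sq (by positivity)).symm]
      apply Real.sqrt_le_sqrt
      rw [div_pow, le_div_iff₀ (by positivity)]
      have hkge' : 512 * K^3 * (m:ℝ)^2 ≤ ε^2 * k := by
        rw [hcdef] at hkge
        have := (div_le_iff₀ (by positivity : (0:ℝ) < ε^2)).1 hkge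
        linarith
      have h2 : (512 * K^3 * m^2) * k ≤ (ε^2 * k) * k :=
        mul_le_mul_of_nonneg_right hkge' hkR.le
      nlinarith [h2]
    calc 4 * K * m * Real.sqrt (2 * k * K)
        ≤ 4 * K * m * (ε * k / (16 * K * m)) := by
          apply mul_le_mul_of_nonneg_left hs (by positivity)
      _ = ε / 4 * k := by
          have h16 : (16 * K * (m:ℝ)) ≠ 0 := by positivity
          field_simp
          ring
  refine ⟨(2 * K ^ k)⁻¹, by positivity, ?_⟩
  intro G V _ _ ρ A E hA hEfin h0E _hsymE hcard
  classical
  obtain ⟨hAfin, hA1, hAinv, X, hXfin, hXcard, hX1, _hX2, _hX3, _hX4⟩ := hA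
  set Afin := hAfin.toFinset with hAfindef
  set Efin := hEfin.toFinset with hEfindef
  have hAco : (Afin : Set G) = A := hAfin.coe_toFinset
  have hEco : (Efin : Set V) = E := hEfin.coe_toFinset
  -- finiteness of the image set
  have hpowfin : ∀ n : ℕ, (A ^ n).Finite := by
    intro n
    induction n with
    | zero => simp
    | succ n ih => rw [pow_succ]; exact ih.mul hAfin
  have hWfin : (actImg ρ (A ^ 8) (E + E)).Finite := by
    have heq : actImg ρ (A ^ 8) (E + E)
        = Set.image2 (fun b w => ρ b w) (A ^ 8) (E + E) := rfl
    rw [heq]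
    exact Set.Finite.image2 _ (hpowfin 8) (hEfin.add hEfin)
  set Wfin := hWfin.toFinset with hWfindef
  have hWco : (Wfin : Set V) = actImg ρ (A ^ 8) (E + E) := hWfin.coe_toFinset
  -- hypotheses of aux_main
  have h1A : (1:G) ∈ Afin := by rw [← Finset.mem_coe, hAco]; exact hA1
  have h0Efin : (0:V) ∈ Efin := by rw [← Finset.mem_coe, hEco]; exact h0E
  have hAinvfin : Afin⁻¹ = Afin := by
    apply Finset.coe_injective
    rw [Finset.coe_inv, hAco, hAinv]
  have hA38 : (A * A * A : Set G) ⊆ A ^ 8 := by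
    have h3 : (A * A * A : Set G) = A ^ 3 := by rw [pow_succ, pow_two]
    rw [h3]
    exact Set.pow_subset_pow_right hA1 (by norm_num)
  have hWW : ∀ g ∈ Afin * Afin * Afin, ∀ w ∈ Efin, ρ g w ∈ Wfin := by
    intro g hg w hw
    have hg' : g ∈ (A * A * A : Set G) := by
      rw [← hAco, ← Finset.coe_mul, ← Finset.coe_mul]
      exact_mod_cast hg
    have hw' : w ∈ E := by rw [← hEco]; exact_mod_cast hw
    have hwEE : w ∈ E + E := by
      have := Set.add_mem_add hw' h0E
      rwa [add_zero] at this
    rw [← Finset.mem_coe, hWco]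
    exact ⟨g, hA38 hg', w, hwEE, rfl⟩
  have hWcard : (Wfin.card : ℝ) ≤ K * Efin.card := by
    have h1 : Wfin.card = (actImg ρ (A ^ 8) (E + E)).ncard :=
      (Set.ncard_eq_toFinset_card _ hWfin).symm
    have h2 : Efin.card = E.ncard := (Set.ncard_eq_toFinset_card _ hEfin).symm
    rw [h1, h2]
    exact hcard
  have hAA : ((Afin * Afin).card : ℝ) ≤ K * Afin.card := by
    have hco : ((Afin * Afin : Finset G) : Set G) = A * A := by
      rw [Finset.coe_mul, hAco]
    have h1 : ((Afin * Afin).card : ℕ) = (A * A : Set G).ncard := by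
      rw [← Set.ncard_coe_finset, hco]
    have hXA : (X * A : Set G).Finite := hXfin.mul hAfin
    have h2 : (A * A : Set G).ncard ≤ (X * A : Set G).ncard :=
      Set.ncard_le_ncard hX1 hXA
    have h3 : (X * A : Set G).ncard ≤ X.ncard * A.ncard := by
      rw [← Nat.card_coe_set_eq, ← Nat.card_coe_set_eq, ← Nat.card_coe_set_eq]
      exact Set.natCard_mul_le
    have h4 : Afin.card = A.ncard := (Set.ncard_eq_toFinset_card _ hAfin).symm
    have h5 : ((A * A : Set G).ncard : ℝ) ≤ (X.ncard : ℝ) * A.ncard := by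
      exact_mod_cast le_trans h2 h3
    rw [h1, h4] at *
    calc ((A * A : Set G).ncard : ℝ) ≤ (X.ncard : ℝ) * A.ncard := h5
      _ ≤ K * A.ncard := by
          apply mul_le_mul_of_nonneg_right hXcard (Nat.cast_nonneg _)
  obtain ⟨E', hE'sub, hE'size, B, hBsub, hBne, hBcard, hinv⟩ :=
    aux_main ρ K ε hK hε k m hk2 hm1 hm hkK Afin Efin h1A hAinvfin h0Efin Wfin hWW hWcard hAA
  have hEncard : (E.ncard : ℝ) = Efin.card := by
    rw [Set.ncard_eq_toFinset_card _ hEfin]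
  have hAncard : (A.ncard : ℝ) = Afin.card := by
    rw [Set.ncard_eq_toFinset_card _ hAfin]
  refine ⟨(E' : Set V), ?_, ?_, ((B * B⁻¹ : Finset G) : Set G), ?_, ?_, ?_, ?_, ?_⟩
  · -- E' ⊆ actImg ρ (A ^ 2) E
    intro v hv
    obtain ⟨g, hg, w, hw, hgw⟩ := hE'sub v hv
    refine ⟨g, ?_, w, ?_, hgw⟩
    · rw [pow_two, ← hAco, ← Finset.coe_mul]
      exact_mod_cast hg
    · rw [← hEco]; exact_mod_cast hw
  · -- size of E'
    rw [Set.ncard_coe_finset, hEncard]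
    linarith
  · -- A' ⊆ A ^ 4
    intro x hx
    have hxf : x ∈ B * B⁻¹ := Finset.mem_coe.1 hx
    rcases Finset.mem_mul.1 hxf with ⟨p, hp, q, hq, rfl⟩
    rcases Finset.mem_inv.1 hq with ⟨b, hb, rfl⟩
    have hpA : p ∈ A := by rw [← hAco]; exact_mod_cast hBsub hp
    have hbA : b ∈ A := by rw [← hAco]; exact_mod_cast hBsub hb
    have hbinv : b⁻¹ ∈ A := by rw [← hAinv]; exact Set.inv_mem_inv.2 hbA
    have h24 : (A * A : Set G) ⊆ A ^ 4 := by
      have h2 : (A * A : Set G) = A ^ 2 := (pow_two A).symm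
      rw [h2]
      exact Set.pow_subset_pow_right hA1 (by norm_num)
    exact h24 (Set.mul_mem_mul hpA hbinv)
  · -- 1 ∈ A'
    obtain ⟨b₀, hb₀⟩ := hBne
    rw [Finset.mem_coe]
    have := Finset.mul_mem_mul hb₀ (Finset.inv_mem_inv hb₀)
    rwa [mul_inv_cancel] at this
  · -- symmetry of A'
    rw [Finset.coe_mul, Finset.coe_inv, mul_inv_rev, inv_inv]
  · -- size of A'
    rw [Set.ncard_coe_finset, hAncard, inv_mul_le_iff₀ (by positivity)]
    exact hBcard
  · -- near invariance
    intro a ha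
    have ha' : a ∈ B * B⁻¹ := Finset.mem_coe.1 ha
    have himg : ((ρ a : V → V) '' (E' : Set V)) = ((E'.image fun v => ρ a v : Finset V) : Set V) := by
      rw [Finset.coe_image]
    rw [himg, ← Finset.coe_sdiff, Set.ncard_coe_finset]
    have := hinv a ha'
    rw [Set.ncard_coe_finset]
    exact this
end

section
/- Let K ≥ 1 and k ≥ 3, let π : G̃ → G be a surjective group homomorphism, and let Ã be a K-approximate group in G̃. Then there exist constants c, C > 0 depending only on K and k such that for every h ∈ π(Ã), c·|Ã|/|π(Ã)| ≤ |π⁻¹({h}) ∩ Ã^k| ≤ C·|Ã|/|π(Ã)|. -/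
open Pointwise

private lemma aux_ncard_prod {α β : Type*} (s : Set α) (t : Set β) :
    (s ×ˢ t).ncard = s.ncard * t.ncard := by
  rw [← Nat.card_coe_set_eq, ← Nat.card_coe_set_eq, ← Nat.card_coe_set_eq,
    ← Nat.card_prod]
  exact Nat.card_congr (Equiv.Set.prod s t)

private lemma aux_finite_pow {G : Type*} [Monoid G] {s : Set G} (hs : s.Finite) :
    ∀ n, ((s ^ n : Set G)).Finite
  | 0 => by rw [pow_zero]; exact Set.finite_one
  | n + 1 => by rw [pow_succ]; exact (aux_finite_pow hs n).mul hs

private lemma aux_ncard_mul_le {G : Type*} [Group G] (s t : Set G) :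
    (s * t).ncard ≤ s.ncard * t.ncard := by
  simpa [Nat.card_coe_set_eq] using Set.natCard_mul_le (s := s) (t := t)

private lemma aux_ncard_pow_le {G : Type*} [Group G] (s : Set G) :
    ∀ n, ((s ^ n : Set G)).ncard ≤ s.ncard ^ n
  | 0 => by rw [pow_zero, pow_zero, show (1 : Set G) = {1} from rfl, Set.ncard_singleton]
  | n + 1 => by
      rw [pow_succ, pow_succ]
      exact (aux_ncard_mul_le _ _).trans (Nat.mul_le_mul_right _ (aux_ncard_pow_le s n))

/-- **Projection lemma, fibre count.** -/
theorem projection_lemma_fibres (K : ℝ) (hK : 1 ≤ K) (k : ℕ) (hk : 3 ≤ k) :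
    ∃ c C : ℝ, 0 < c ∧ 0 < C ∧
      ∀ (G₁ G₂ : Type) [Group G₁] [Group G₂] (π : G₁ →* G₂), Function.Surjective π →
        ∀ A : Set G₁, IsApproxGroup K A →
          ∀ h ∈ π '' A,
            c * (A.ncard : ℝ) / ((π '' A).ncard : ℝ) ≤ ((π ⁻¹' {h} ∩ A ^ k).ncard : ℝ) ∧
            ((π ⁻¹' {h} ∩ A ^ k).ncard : ℝ) ≤ C * (A.ncard : ℝ) / ((π '' A).ncard : ℝ) := by
  obtain ⟨m, rfl⟩ : ∃ m, k = m + 3 := ⟨k - 3, by omega⟩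
  refine ⟨1, K ^ (m + 4), one_pos, by positivity, ?_⟩
  intro G₁ G₂ _ _ π hπ A hA h hh
  obtain ⟨hAfin, h1A, hAinv, X, hXfin, hXK, hXA, -, -, -⟩ := hA
  set B := π '' A with hB
  have hBfin : B.Finite := hAfin.image _
  have hBpos : 0 < B.ncard := (Set.ncard_pos hBfin).2 ⟨h, hh⟩
  obtain ⟨a, haA, rfl⟩ := hh
  -- a choice of section of π on B with values in A
  have hgex : ∀ h' : G₂, ∃ x : G₁, h' ∈ B → x ∈ A ∧ π x = h' := by
    intro h'
    by_cases hh' : h' ∈ B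
    · obtain ⟨x, hx, hxπ⟩ := hh'
      exact ⟨x, fun _ => ⟨hx, hxπ⟩⟩
    · exact ⟨1, fun c => absurd c hh'⟩
  choose g hg using hgex
  have hanum : ∀ n : ℕ, (A ^ (n + 1) : Set G₁) = A * A ^ n := fun n => pow_succ' A n
  -- fibre lower inclusion
  have L1 : a • (π ⁻¹' {1} ∩ A ^ (m + 2)) ⊆ π ⁻¹' {π a} ∩ A ^ (m + 3) := by
    rintro x ⟨y, ⟨hy1, hy2⟩, rfl⟩
    simp only [Set.mem_preimage, Set.mem_singleton_iff] at hy1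
    refine ⟨?_, ?_⟩
    · simp only [smul_eq_mul, Set.mem_preimage, Set.mem_singleton_iff, map_mul, hy1, mul_one]
    · rw [hanum]
      exact Set.mul_mem_mul haA hy2
  -- fibre upper inclusion
  have L2 : π ⁻¹' {π a} ∩ A ^ (m + 3) ⊆ a • (π ⁻¹' {1} ∩ A ^ (m + 4)) := by
    rintro x ⟨hx1, hx2⟩
    simp only [Set.mem_preimage, Set.mem_singleton_iff] at hx1
    refine ⟨a⁻¹ * x, ⟨?_, ?_⟩, by simp [smul_eq_mul]⟩
    · simp only [Set.mem_preimage, Set.mem_singleton_iff, map_mul, map_inv, hx1,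
        inv_mul_cancel]
    · rw [hanum]
      refine Set.mul_mem_mul ?_ hx2
      rw [← hAinv]
      exact Set.inv_mem_inv.2 haA
  have hNfin : ∀ n : ℕ, (π ⁻¹' {1} ∩ A ^ n).Finite :=
    fun n => (aux_finite_pow hAfin n).subset Set.inter_subset_right
  have hFfin : (π ⁻¹' {π a} ∩ A ^ (m + 3)).Finite :=
    (aux_finite_pow hAfin _).subset Set.inter_subset_right
  -- counting bound 1 : |A| ≤ |B| * |ker ∩ A²|
  have C1 : A.ncard ≤ B.ncard * (π ⁻¹' {1} ∩ A ^ 2).ncard := by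
    have hmaps : ∀ x ∈ A, ((π x, (g (π x))⁻¹ * x) : G₂ × G₁) ∈ B ×ˢ (π ⁻¹' {1} ∩ A ^ 2) := by
      intro x hx
      have hxB : π x ∈ B := ⟨x, hx, rfl⟩
      obtain ⟨hgA, hgπ⟩ := hg (π x) hxB
      refine ⟨hxB, ?_, ?_⟩
      · simp only [Set.mem_preimage, Set.mem_singleton_iff, map_mul, map_inv, hgπ,
          inv_mul_cancel]
      · rw [sq]
        refine Set.mul_mem_mul ?_ hx
        rw [← hAinv]
        exact Set.inv_mem_inv.2 hgA
    have hinj : Set.InjOn (fun x => ((π x, (g (π x))⁻¹ * x) : G₂ × G₁)) A := by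
      intro x hx y hy hxy
      simp only [Prod.mk.injEq] at hxy
      obtain ⟨h1, h2⟩ := hxy
      rw [h1] at h2
      exact mul_left_cancel h2
    calc A.ncard ≤ (B ×ˢ (π ⁻¹' {1} ∩ A ^ 2)).ncard :=
          Set.ncard_le_ncard_of_injOn _ hmaps hinj (hBfin.prod (hNfin 2))
      _ = B.ncard * (π ⁻¹' {1} ∩ A ^ 2).ncard := aux_ncard_prod _ _
  -- counting bound 2 : |B| * |ker ∩ A^(m+4)| ≤ |A^(m+5)|
  have C2 : B.ncard * (π ⁻¹' {1} ∩ A ^ (m + 4)).ncard ≤ (A ^ (m + 5) : Set G₁).ncard := by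
    have hmaps : ∀ p ∈ B ×ˢ (π ⁻¹' {1} ∩ A ^ (m + 4)),
        g p.1 * p.2 ∈ (A ^ (m + 5) : Set G₁) := by
      rintro ⟨h', n⟩ ⟨hh', hn1, hn2⟩
      obtain ⟨hgA, hgπ⟩ := hg h' hh'
      rw [hanum]
      exact Set.mul_mem_mul hgA hn2
    have hinj : Set.InjOn (fun p : G₂ × G₁ => g p.1 * p.2)
        (B ×ˢ (π ⁻¹' {1} ∩ A ^ (m + 4))) := by
      rintro ⟨h₁, n₁⟩ ⟨hh₁, hn₁, -⟩ ⟨h₂, n₂⟩ ⟨hh₂, hn₂, -⟩ hxy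
      simp only at hxy
      simp only [Set.mem_preimage, Set.mem_singleton_iff] at hn₁ hn₂
      have e1 : h₁ = h₂ := by
        have := congrArg π hxy
        simpa only [map_mul, (hg h₁ hh₁).2, (hg h₂ hh₂).2, hn₁, hn₂, mul_one] using this
      subst e1
      have : n₁ = n₂ := mul_left_cancel hxy
      simp [this]
    calc B.ncard * (π ⁻¹' {1} ∩ A ^ (m + 4)).ncard
        = (B ×ˢ (π ⁻¹' {1} ∩ A ^ (m + 4))).ncard := (aux_ncard_prod _ _).symm
      _ ≤ (A ^ (m + 5) : Set G₁).ncard :=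
          Set.ncard_le_ncard_of_injOn _ hmaps hinj (aux_finite_pow hAfin _)
  -- counting bound 3 : |A^(m+5)| ≤ K^(m+4) |A|
  have C3 : (((A ^ (m + 5) : Set G₁)).ncard : ℝ) ≤ K ^ (m + 4) * A.ncard := by
    have hsub : (A ^ (m + 5) : Set G₁) ⊆ X ^ (m + 4) * A := by
      have := Set.pow_subset_pow_mul_of_sq_subset_mul (s := A) (t := X)
        (by rw [sq]; exact hXA) (n := m + 5) (by omega)
      simpa using this
    have h1 : ((A ^ (m + 5) : Set G₁)).ncard ≤ X.ncard ^ (m + 4) * A.ncard :=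
      (Set.ncard_le_ncard hsub ((aux_finite_pow hXfin _).mul hAfin)).trans
        ((aux_ncard_mul_le _ _).trans (Nat.mul_le_mul_right _ (aux_ncard_pow_le X _)))
    calc (((A ^ (m + 5) : Set G₁)).ncard : ℝ) ≤ (X.ncard : ℝ) ^ (m + 4) * A.ncard := by
          exact_mod_cast h1
      _ ≤ K ^ (m + 4) * A.ncard := by
          gcongr
  -- assemble
  have lower : (π ⁻¹' {1} ∩ A ^ (m + 2)).ncard ≤ (π ⁻¹' {π a} ∩ A ^ (m + 3)).ncard := by
    calc (π ⁻¹' {1} ∩ A ^ (m + 2)).ncard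
        = (a • (π ⁻¹' {1} ∩ A ^ (m + 2))).ncard := (Set.ncard_smul_set a _).symm
      _ ≤ _ := Set.ncard_le_ncard L1 hFfin
  have hN2le : (π ⁻¹' {1} ∩ A ^ 2).ncard ≤ (π ⁻¹' {1} ∩ A ^ (m + 2)).ncard :=
    Set.ncard_le_ncard
      (Set.inter_subset_inter_right _ (Set.pow_subset_pow_right h1A (by omega))) (hNfin _)
  have upper : (π ⁻¹' {π a} ∩ A ^ (m + 3)).ncard ≤ (π ⁻¹' {1} ∩ A ^ (m + 4)).ncard := by
    calc (π ⁻¹' {π a} ∩ A ^ (m + 3)).ncard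
        ≤ (a • (π ⁻¹' {1} ∩ A ^ (m + 4))).ncard := Set.ncard_le_ncard L2 ((hNfin _).smul_set)
      _ = _ := Set.ncard_smul_set a _
  have hBpos' : (0 : ℝ) < B.ncard := by exact_mod_cast hBpos
  constructor
  · rw [one_mul, div_le_iff₀ hBpos']
    have hn : A.ncard ≤ B.ncard * (π ⁻¹' {π a} ∩ A ^ (m + 3)).ncard :=
      C1.trans (Nat.mul_le_mul_left _ (hN2le.trans lower))
    have : (A.ncard : ℝ) ≤ (B.ncard : ℝ) * (π ⁻¹' {π a} ∩ A ^ (m + 3)).ncard := by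
      exact_mod_cast hn
    linarith
  · rw [le_div_iff₀ hBpos']
    have hn : B.ncard * (π ⁻¹' {π a} ∩ A ^ (m + 3)).ncard ≤ (A ^ (m + 5) : Set G₁).ncard :=
      (Nat.mul_le_mul_left _ upper).trans C2
    have h2 : (B.ncard : ℝ) * (π ⁻¹' {π a} ∩ A ^ (m + 3)).ncard ≤ K ^ (m + 4) * A.ncard :=
      le_trans (by exact_mod_cast hn) C3
    rw [mul_comm]
    exact h2
end

section
/- Let K ≥ 1 and k ≥ 3, let π : G̃ → G be a surjective group homomorphism, and let Ã be a K-approximate group in G̃. Then there exist constants c, C > 0 depending only on K and k such that (ker(π) ∩ Ã^k)³ is a C-approximate group whose cardinality lies between c·|Ã|/|π(Ã)| and C·|Ã|/|π(Ã)|. -/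
open Pointwise

section Aux

variable {G₁ G₂ : Type*} [Group G₁] [Group G₂] [DecidableEq G₁] [DecidableEq G₂]

/-- Counting, upper bound: `|π(A)| * |A^m ∩ ker π| ≤ |A^(m+1)|`. -/
lemma aux_count_upper (π : G₁ →* G₂) (A : Finset G₁) (m : ℕ) :
    (A.image π).card * ((A ^ m).filter (fun x => π x = 1)).card ≤ (A ^ (m + 1)).card := by
  haveI : Nonempty G₁ := ⟨1⟩
  set sec : G₂ → G₁ := Function.invFunOn π ↑A with hsecdef
  have hsecA : ∀ y ∈ A.image π, sec y ∈ A ∧ π (sec y) = y := by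
    intro y hy
    rw [Finset.mem_image] at hy
    obtain ⟨a, ha, rfl⟩ := hy
    have hex : ∃ x ∈ (A : Set G₁), π x = π a := ⟨a, Finset.mem_coe.2 ha, rfl⟩
    have hm := Function.invFunOn_mem (f := ⇑π) (s := (A : Set G₁)) (b := π a) hex
    have he := Function.invFunOn_eq (f := ⇑π) (s := (A : Set G₁)) (b := π a) hex
    exact ⟨Finset.mem_coe.1 hm, he⟩
  rw [← Finset.card_product]
  apply Finset.card_le_card_of_injOn (fun p => sec p.1 * p.2)
  · rintro ⟨y, h⟩ hp
    rw [Finset.mem_coe, Finset.mem_product] at hp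
    obtain ⟨hy, hh⟩ := hp
    rw [Finset.mem_filter] at hh
    have hs := hsecA y hy
    rw [pow_succ']
    exact Finset.mul_mem_mul hs.1 hh.1
  · rintro ⟨y₁, h₁⟩ hp₁ ⟨y₂, h₂⟩ hp₂ heq
    simp only [Finset.coe_product, Set.mem_prod, Finset.mem_coe] at hp₁ hp₂
    rw [Finset.mem_filter] at hp₁ hp₂
    have hs₁ := hsecA y₁ hp₁.1
    have hs₂ := hsecA y₂ hp₂.1
    have hy : y₁ = y₂ := by
      have := congrArg π heq
      simp only [map_mul, hs₁.2, hs₂.2, hp₁.2.2, hp₂.2.2, mul_one] at this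
      exact this
    subst hy
    simp only [Prod.mk.injEq, true_and]
    exact mul_left_cancel heq

/-- Counting, lower bound: `|A| ≤ |π(A)| * |A² ∩ ker π|` for symmetric `A`. -/
lemma aux_count_lower (π : G₁ →* G₂) (A : Finset G₁) (hinv : A⁻¹ = A) :
    A.card ≤ (A.image π).card * ((A ^ 2).filter (fun x => π x = 1)).card := by
  haveI : Nonempty G₁ := ⟨1⟩
  set sec : G₂ → G₁ := Function.invFunOn π ↑A with hsecdef
  have hsecA : ∀ y ∈ A.image π, sec y ∈ A ∧ π (sec y) = y := by
    intro y hy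
    rw [Finset.mem_image] at hy
    obtain ⟨a, ha, rfl⟩ := hy
    have hex : ∃ x ∈ (A : Set G₁), π x = π a := ⟨a, Finset.mem_coe.2 ha, rfl⟩
    have hm := Function.invFunOn_mem (f := ⇑π) (s := (A : Set G₁)) (b := π a) hex
    have he := Function.invFunOn_eq (f := ⇑π) (s := (A : Set G₁)) (b := π a) hex
    exact ⟨Finset.mem_coe.1 hm, he⟩
  rw [← Finset.card_product]
  apply Finset.card_le_card_of_injOn (fun a => (π a, (sec (π a))⁻¹ * a))
  · intro a ha
    have him : π a ∈ A.image π := Finset.mem_image_of_mem _ ha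
    have hs := hsecA _ him
    rw [Finset.mem_coe, Finset.mem_product]
    refine ⟨him, Finset.mem_filter.2 ⟨?_, ?_⟩⟩
    · have h1 : (sec (π a))⁻¹ ∈ A := by
        rw [← hinv]
        exact Finset.inv_mem_inv hs.1
      rw [sq]
      exact Finset.mul_mem_mul h1 ha
    · simp [map_mul, hs.2]
  · intro a ha b hb heq
    simp only [Prod.mk.injEq] at heq
    have h1 : sec (π a) = sec (π b) := by rw [heq.1]
    have := heq.2
    rw [h1] at this
    exact mul_left_cancel this

/-- Product of kernel parts. -/
lemma aux_filter_mul (π : G₁ →* G₂) (A : Finset G₁) (m n : ℕ) :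
    ((A ^ m).filter (fun x => π x = 1)) * ((A ^ n).filter (fun x => π x = 1)) ⊆
      (A ^ (m + n)).filter (fun x => π x = 1) := by
  intro x hx
  rw [Finset.mem_mul] at hx
  obtain ⟨y, hy, z, hz, rfl⟩ := hx
  rw [Finset.mem_filter] at hy hz ⊢
  refine ⟨?_, by simp [map_mul, hy.2, hz.2]⟩
  rw [pow_add]
  exact Finset.mul_mem_mul hy.1 hz.1

end Aux

/-- **Projection lemma, kernel part.**  `(ker π ∩ Ã^k)³` is a `C`-approximate group of
cardinality comparable to `|Ã|/|π(Ã)|`. -/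
theorem projection_lemma_kernel (K : ℝ) (hK : 1 ≤ K) (k : ℕ) (hk : 3 ≤ k) :
    ∃ c C : ℝ, 0 < c ∧ 0 < C ∧
      ∀ (G₁ G₂ : Type) [Group G₁] [Group G₂] (π : G₁ →* G₂), Function.Surjective π →
        ∀ A : Set G₁, IsApproxGroup K A →
          IsApproxGroup C (((MonoidHom.ker π : Set G₁) ∩ A ^ k) ^ 3) ∧
          c * (A.ncard : ℝ) / ((π '' A).ncard : ℝ) ≤
            ((((MonoidHom.ker π : Set G₁) ∩ A ^ k) ^ 3).ncard : ℝ) ∧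
          ((((MonoidHom.ker π : Set G₁) ∩ A ^ k) ^ 3).ncard : ℝ) ≤
            C * (A.ncard : ℝ) / ((π '' A).ncard : ℝ) := by
  have hK0 : (0 : ℝ) < K := lt_of_lt_of_le one_pos hK
  refine ⟨1, 2 * K ^ (14 * k + 2), one_pos, by positivity, ?_⟩
  intro G₁ G₂ _ _ π hπ A hA
  classical
  obtain ⟨hfin, h1A, hinvA, X, hXfin, hXcard, hX1, hX2, hX3, hX4⟩ := hA
  set Af : Finset G₁ := hfin.toFinset with hAfdef
  set Xf : Finset G₁ := hXfin.toFinset with hXfdef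
  have hAfcoe : (Af : Set G₁) = A := hfin.coe_toFinset
  have hXfcoe : (Xf : Set G₁) = X := hXfin.coe_toFinset
  have h1Af : (1 : G₁) ∈ Af := by rw [← Finset.mem_coe, hAfcoe]; exact h1A
  have hinvAf : Af⁻¹ = Af := by
    apply Finset.coe_injective
    rw [Finset.coe_inv, hAfcoe, hinvA]
  have hcov : Af * Af ⊆ Xf * Af := by
    rw [← Finset.coe_subset, Finset.coe_mul, Finset.coe_mul, hAfcoe, hXfcoe]
    exact hX1
  have hXfK : (Xf.card : ℝ) ≤ K := by
    rwa [← Set.ncard_coe_finset, hXfcoe]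
  -- growth of powers
  have hgrow : ∀ m : ℕ, ((Af ^ (m + 1)).card : ℝ) ≤ K ^ m * Af.card := by
    intro m
    have hsub : Af ^ (m + 1) ⊆ Xf ^ m * Af := by
      have := Finset.pow_subset_pow_mul_of_sq_subset_mul (s := Af) (t := Xf)
        (by rw [sq]; exact hcov) (Nat.succ_ne_zero m)
      simpa using this
    calc ((Af ^ (m + 1)).card : ℝ) ≤ ((Xf ^ m * Af).card : ℝ) := by
          exact_mod_cast Finset.card_le_card hsub
      _ ≤ ((Xf ^ m).card : ℝ) * Af.card := by exact_mod_cast Finset.card_mul_le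
      _ ≤ ((Xf.card : ℝ) ^ m) * Af.card :=
          mul_le_mul_of_nonneg_right (by exact_mod_cast Finset.card_pow_le) (Nat.cast_nonneg _)
      _ ≤ K ^ m * Af.card :=
          mul_le_mul_of_nonneg_right (pow_le_pow_left₀ (Nat.cast_nonneg _) hXfK m)
            (Nat.cast_nonneg _)
  -- kernel pieces
  set Hf : ℕ → Finset G₁ := fun m => (Af ^ m).filter (fun x => π x = 1) with hHfdef
  have hHmono : ∀ {m n : ℕ}, m ≤ n → Hf m ⊆ Hf n := by
    intro m n hmn
    exact Finset.filter_subset_filter _ (Finset.pow_subset_pow_right h1Af hmn)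
  have hHmul : ∀ m n : ℕ, Hf m * Hf n ⊆ Hf (m + n) := fun m n => aux_filter_mul π Af m n
  have hH1 : ∀ m : ℕ, (1 : G₁) ∈ Hf m := by
    intro m
    exact Finset.mem_filter.2 ⟨Finset.one_mem_pow h1Af, map_one π⟩
  have hHinv : ∀ m : ℕ, (Hf m)⁻¹ = Hf m := by
    intro m
    ext x
    rw [Finset.mem_inv', Finset.mem_filter, Finset.mem_filter]
    have hxp : x⁻¹ ∈ Af ^ m ↔ x ∈ Af ^ m := by
      constructor <;> intro h
      · have : (x⁻¹)⁻¹ ∈ (Af ^ m)⁻¹ := Finset.inv_mem_inv h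
        rwa [inv_inv, ← inv_pow, hinvAf] at this
      · have : x⁻¹ ∈ (Af ^ m)⁻¹ := Finset.inv_mem_inv h
        rwa [← inv_pow, hinvAf] at this
    have hxk : π x⁻¹ = 1 ↔ π x = 1 := by
      rw [map_inv, inv_eq_one]
    rw [hxp, hxk]
  set Bf : Finset G₁ := Hf k with hBfdef
  have hB1 : (1 : G₁) ∈ Bf := hH1 k
  have hBinv : Bf⁻¹ = Bf := hHinv k
  have hBpow : ∀ j : ℕ, Bf ^ j ⊆ Hf (k * j) := by
    intro j
    induction j with
    | zero => simpa using hH1 0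
    | succ n ih =>
      calc Bf ^ (n + 1) = Bf ^ n * Bf := pow_succ _ _
        _ ⊆ Hf (k * n) * Hf k := Finset.mul_subset_mul ih (le_refl _)
        _ ⊆ Hf (k * n + k) := hHmul _ _
        _ = Hf (k * (n + 1)) := by ring_nf
  have hBpowinv : ∀ j : ℕ, (Bf ^ j)⁻¹ = Bf ^ j := by
    intro j; rw [← inv_pow, hBinv]
  have hBmono : ∀ {i j : ℕ}, i ≤ j → Bf ^ i ⊆ Bf ^ j :=
    fun h => Finset.pow_subset_pow_right hB1 h
  -- image cardinality
  set Npi : ℕ := (Af.image π).card with hNpidef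
  have hNpipos : 0 < Npi := Finset.card_pos.2 ⟨π 1, Finset.mem_image_of_mem _ h1Af⟩
  have hNpiR : (0 : ℝ) < (Npi : ℝ) := by exact_mod_cast hNpipos
  have hupper : ∀ m : ℕ, (Npi : ℝ) * ((Hf m).card : ℝ) ≤ K ^ m * Af.card := by
    intro m
    calc (Npi : ℝ) * ((Hf m).card : ℝ) ≤ ((Af ^ (m + 1)).card : ℝ) := by
          exact_mod_cast aux_count_upper π Af m
      _ ≤ K ^ m * Af.card := hgrow m
  have hlower : (Af.card : ℝ) ≤ (Npi : ℝ) * ((Hf 2).card : ℝ) := by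
    exact_mod_cast aux_count_lower π Af hinvAf
  -- Ruzsa covering
  have hB0ne : (Hf 2).Nonempty := ⟨1, hH1 2⟩
  have hcovcard : (((Bf ^ 14) * Hf 2).card : ℝ) ≤ K ^ (14 * k + 2) * ((Hf 2).card : ℝ) := by
    have hsub : (Bf ^ 14) * Hf 2 ⊆ Hf (14 * k + 2) := by
      calc (Bf ^ 14) * Hf 2 ⊆ Hf (k * 14) * Hf 2 :=
            Finset.mul_subset_mul (hBpow 14) (le_refl _)
        _ ⊆ Hf (k * 14 + 2) := hHmul _ _
        _ = Hf (14 * k + 2) := by rw [mul_comm]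
    have h1 : (Npi : ℝ) * (((Bf ^ 14) * Hf 2).card : ℝ) ≤
        K ^ (14 * k + 2) * ((Npi : ℝ) * ((Hf 2).card : ℝ)) := by
      calc (Npi : ℝ) * (((Bf ^ 14) * Hf 2).card : ℝ)
          ≤ (Npi : ℝ) * ((Hf (14 * k + 2)).card : ℝ) :=
            mul_le_mul_of_nonneg_left (by exact_mod_cast Finset.card_le_card hsub)
              (Nat.cast_nonneg _)
        _ ≤ K ^ (14 * k + 2) * (Af.card : ℝ) := hupper _
        _ ≤ K ^ (14 * k + 2) * ((Npi : ℝ) * ((Hf 2).card : ℝ)) := by gcongr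
    have h2 : (Npi : ℝ) * (((Bf ^ 14) * Hf 2).card : ℝ) ≤
        (Npi : ℝ) * (K ^ (14 * k + 2) * ((Hf 2).card : ℝ)) := by
      calc (Npi : ℝ) * (((Bf ^ 14) * Hf 2).card : ℝ)
          ≤ K ^ (14 * k + 2) * ((Npi : ℝ) * ((Hf 2).card : ℝ)) := h1
        _ = (Npi : ℝ) * (K ^ (14 * k + 2) * ((Hf 2).card : ℝ)) := by ring
    exact (mul_le_mul_iff_right₀ hNpiR).1 h2
  obtain ⟨T, hTsub, hTcard, hTcov⟩ := Finset.ruzsa_covering_mul hB0ne hcovcard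
  -- the covering set
  set Xc : Finset G₁ := T ∪ T⁻¹ with hXcdef
  have hXcinv : Xc⁻¹ = Xc := by
    ext x
    simp only [hXcdef, Finset.mem_union, Finset.mem_inv', inv_inv]
    tauto
  have hmemB : ∀ (j : ℕ) (x : G₁), x⁻¹ ∈ Bf ^ j → x ∈ Bf ^ j := by
    intro j x h
    have h2 := Finset.inv_mem_inv h
    rw [inv_inv, hBpowinv j] at h2
    exact h2
  have hXcsub : Xc ⊆ Bf ^ 14 := by
    intro x hx
    rcases Finset.mem_union.1 hx with h | h
    · exact hTsub h
    · exact hmemB 14 x (hTsub (Finset.mem_inv'.1 h))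
  have hcovL : Bf ^ 14 ⊆ Xc * Bf ^ 2 := by
    intro x hx
    have := hTcov hx
    have hsub : T * (Hf 2 / Hf 2) ⊆ Xc * Bf ^ 2 := by
      apply Finset.mul_subset_mul Finset.subset_union_left
      rw [div_eq_mul_inv, hHinv 2, sq]
      apply Finset.mul_subset_mul <;> exact hHmono (by omega)
    exact hsub this
  have hcovR : Bf ^ 14 ⊆ Bf ^ 2 * Xc := by
    intro x hx
    have hxinv : x⁻¹ ∈ Bf ^ 14 := hmemB 14 x⁻¹ (by rwa [inv_inv])
    obtain ⟨y, hy, z, hz, hyz⟩ := Finset.mem_mul.1 (hcovL hxinv)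
    have hxe : x = z⁻¹ * y⁻¹ := by rw [← mul_inv_rev, hyz, inv_inv]
    rw [hxe]
    refine Finset.mul_mem_mul (hmemB 2 z⁻¹ (by rwa [inv_inv])) ?_
    rw [← hXcinv]
    exact Finset.inv_mem_inv hy
  -- P = Bf ^ 3
  set P : Finset G₁ := Bf ^ 3 with hPdef
  have hPP : P * P = Bf ^ 6 := by rw [hPdef, ← pow_add]
  have hmulL : ∀ {i j : ℕ}, i ≤ j → ∀ s : Finset G₁, s * Bf ^ i ⊆ s * Bf ^ j :=
    fun h s => Finset.mul_subset_mul (le_refl s) (hBmono h)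
  have hmulR : ∀ {i j : ℕ}, i ≤ j → ∀ s : Finset G₁, Bf ^ i * s ⊆ Bf ^ j * s :=
    fun h s => Finset.mul_subset_mul (hBmono h) (le_refl s)
  -- the four approximate-group inclusions
  have hi1 : P * P ⊆ Xc * P := by
    rw [hPP]
    calc Bf ^ 6 ⊆ Bf ^ 14 := hBmono (by omega)
      _ ⊆ Xc * Bf ^ 2 := hcovL
      _ ⊆ Xc * P := Finset.mul_subset_mul (le_refl _) (hBmono (by omega))
  have hi3 : P * P ⊆ P * Xc := by
    rw [hPP]
    calc Bf ^ 6 ⊆ Bf ^ 14 := hBmono (by omega)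
      _ ⊆ Bf ^ 2 * Xc := hcovR
      _ ⊆ P * Xc := Finset.mul_subset_mul (hBmono (by omega)) (le_refl _)
  have hi2 : Xc * P ⊆ P * Xc * Xc := by
    calc Xc * P ⊆ Bf ^ 14 * Bf ^ 3 := Finset.mul_subset_mul hXcsub (le_refl _)
      _ = Bf ^ 3 * Bf ^ 14 := by rw [← pow_add, ← pow_add, Nat.add_comm]
      _ ⊆ Bf ^ 3 * (Bf ^ 2 * Xc) := Finset.mul_subset_mul (le_refl _) hcovR
      _ = Bf ^ 5 * Xc := by rw [← mul_assoc, ← pow_add]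
      _ ⊆ Bf ^ 14 * Xc := Finset.mul_subset_mul (hBmono (by omega)) (le_refl _)
      _ ⊆ (Bf ^ 2 * Xc) * Xc := Finset.mul_subset_mul hcovR (le_refl _)
      _ ⊆ P * Xc * Xc :=
        Finset.mul_subset_mul (Finset.mul_subset_mul (hBmono (by omega)) (le_refl _)) (le_refl _)
  have hi4 : P * Xc ⊆ Xc * Xc * P := by
    calc P * Xc ⊆ Bf ^ 3 * Bf ^ 14 := Finset.mul_subset_mul (le_refl _) hXcsub
      _ = Bf ^ 14 * Bf ^ 3 := by rw [← pow_add, ← pow_add, Nat.add_comm]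
      _ ⊆ (Xc * Bf ^ 2) * Bf ^ 3 := Finset.mul_subset_mul hcovL (le_refl _)
      _ = Xc * Bf ^ 5 := by rw [mul_assoc, ← pow_add]
      _ ⊆ Xc * Bf ^ 14 := Finset.mul_subset_mul (le_refl _) (hBmono (by omega))
      _ ⊆ Xc * (Xc * Bf ^ 2) := Finset.mul_subset_mul (le_refl _) hcovL
      _ = Xc * Xc * Bf ^ 2 := by rw [mul_assoc]
      _ ⊆ Xc * Xc * P := Finset.mul_subset_mul (le_refl _) (hBmono (by omega))
  -- set-level identification
  have hkerSet : (MonoidHom.ker π : Set G₁) ∩ A ^ k = (Bf : Set G₁) := by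
    ext x
    simp only [Set.mem_inter_iff, SetLike.mem_coe, MonoidHom.mem_ker, Finset.mem_coe,
      hBfdef, hHfdef, Finset.mem_filter]
    rw [← hAfcoe, ← Finset.coe_pow, Finset.mem_coe]
    tauto
  have hPSet : ((MonoidHom.ker π : Set G₁) ∩ A ^ k) ^ 3 = (P : Set G₁) := by
    rw [hkerSet, hPdef, Finset.coe_pow]
  have hncardP : (((MonoidHom.ker π : Set G₁) ∩ A ^ k) ^ 3).ncard = P.card := by
    rw [hPSet, Set.ncard_coe_finset]
  have hncardA : A.ncard = Af.card := by rw [← hAfcoe, Set.ncard_coe_finset]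
  have hncardpi : (π '' A).ncard = Npi := by
    rw [← hAfcoe, ← Finset.coe_image, Set.ncard_coe_finset]
  -- cardinality bounds
  have hPlower : (Af.card : ℝ) / (Npi : ℝ) ≤ (P.card : ℝ) := by
    rw [div_le_iff₀ hNpiR]
    calc (Af.card : ℝ) ≤ (Npi : ℝ) * ((Hf 2).card : ℝ) := hlower
      _ ≤ (Npi : ℝ) * (P.card : ℝ) := by
          have hsub2 : Hf 2 ⊆ Bf := hHmono (by omega : 2 ≤ k)
          have hsub3 : Bf ⊆ Bf ^ 3 := Finset.subset_pow hB1 (by norm_num)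
          exact mul_le_mul_of_nonneg_left
            (by exact_mod_cast Finset.card_le_card (hsub2.trans hsub3)) (Nat.cast_nonneg _)
      _ = (P.card : ℝ) * (Npi : ℝ) := by ring
  have hPupper : (P.card : ℝ) ≤ 2 * K ^ (14 * k + 2) * (Af.card : ℝ) / (Npi : ℝ) := by
    rw [le_div_iff₀ hNpiR]
    have hPH : P ⊆ Hf (k * 3) := hBpow 3
    calc (P.card : ℝ) * (Npi : ℝ) = (Npi : ℝ) * (P.card : ℝ) := by ring
      _ ≤ (Npi : ℝ) * ((Hf (k * 3)).card : ℝ) :=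
          mul_le_mul_of_nonneg_left (by exact_mod_cast Finset.card_le_card hPH)
            (Nat.cast_nonneg _)
      _ ≤ K ^ (k * 3) * (Af.card : ℝ) := hupper _
      _ ≤ 2 * K ^ (14 * k + 2) * (Af.card : ℝ) := by
          gcongr
          calc K ^ (k * 3) ≤ K ^ (14 * k + 2) := by
                apply pow_le_pow_right₀ hK; omega
            _ ≤ 2 * K ^ (14 * k + 2) := by nlinarith [pow_pos hK0 (14 * k + 2)]
  refine ⟨?_, ?_, ?_⟩
  · -- approximate group
    rw [hPSet]
    refine ⟨P.finite_toSet, ?_, ?_, (Xc : Set G₁), Xc.finite_toSet, ?_, ?_, ?_, ?_, ?_⟩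
    · exact Finset.mem_coe.2 (Finset.one_mem_pow hB1)
    · rw [← Finset.coe_inv, hBpowinv 3]
    · rw [Set.ncard_coe_finset]
      calc (Xc.card : ℝ) ≤ (T.card : ℝ) + (T⁻¹.card : ℝ) := by
            exact_mod_cast Finset.card_union_le _ _
        _ = 2 * (T.card : ℝ) := by rw [Finset.card_inv]; ring
        _ ≤ 2 * K ^ (14 * k + 2) := by linarith
    · rw [← Finset.coe_mul, ← Finset.coe_mul]; exact_mod_cast hi1
    · rw [← Finset.coe_mul, ← Finset.coe_mul, ← Finset.coe_mul]; exact_mod_cast hi2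
    · rw [← Finset.coe_mul, ← Finset.coe_mul]; exact_mod_cast hi3
    · rw [← Finset.coe_mul, ← Finset.coe_mul, ← Finset.coe_mul]; exact_mod_cast hi4
  · rw [hncardP, hncardA, hncardpi, one_mul]
    exact (div_le_iff₀ hNpiR).2 ((div_le_iff₀ hNpiR).1 hPlower)
  · rw [hncardP, hncardA, hncardpi]
    exact hPupper
end
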